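/- arXiv:1907.11874 — 4 statements merged into one kernel-verified Lean document; each statement's English description precedes it below -/
import Mathlib

section
/- For a simple graph G with m edges, the energy E(G) = sum of absolute values of adjacency eigenvalues satisfies E(G) ≥ 2√m. -/
open SimpleGraph Finset

/-- Adjacency matrix over `ℝ` (classical decidability). -/
noncomputable def adjMatR {n : ℕ} (G : SimpleGraph (Fin n)) : Matrix (Fin n) (Fin n) ℝ :=
  @SimpleGraph.adjMatrix ℝ (Fin n) G (Classical.decRel _) _ _

lemma adjMatR_isHermitian {n : ℕ} (G : SimpleGraph (Fin n)) : (adjMatR G).IsHermitian := by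
  have h : (adjMatR G).IsSymm := @SimpleGraph.isSymm_adjMatrix ℝ (Fin n) G (Classical.decRel _) _ _
  unfold Matrix.IsHermitian
  rw [Matrix.conjTranspose_eq_transpose_of_trivial]
  exact h

/-- Multiset of adjacency eigenvalues (with multiplicity). -/
noncomputable def specMS {n : ℕ} (G : SimpleGraph (Fin n)) : Multiset ℝ :=
  Finset.univ.val.map (adjMatR_isHermitian G).eigenvalues

/-- `i`-th largest adjacency eigenvalue (0-indexed). -/
noncomputable def eigval {n : ℕ} (G : SimpleGraph (Fin n)) (i : ℕ) : ℝ :=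
  ((specMS G).sort (· ≥ ·)).getD i 0

/-- Graph energy. -/
noncomputable def energy {n : ℕ} (G : SimpleGraph (Fin n)) : ℝ :=
  ((specMS G).map (fun x => |x|)).sum

/-- ℓ¹ spectral distance. -/
noncomputable def specDist {n : ℕ} (G H : SimpleGraph (Fin n)) : ℝ :=
  ∑ i ∈ Finset.range n, |eigval G i - eigval H i|

/-- number of edges -/
noncomputable def numEdges {n : ℕ} (G : SimpleGraph (Fin n)) : ℕ := G.edgeSet.ncard

/-- `K_2 + (n-2)K_1`: one edge plus isolated vertices. -/
def oneEdgeG (n : ℕ) : SimpleGraph (Fin n) :=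
  SimpleGraph.fromRel (fun u v => (u : ℕ) = 0 ∧ (v : ℕ) = 1)

/-- `P_3 + (n-3)K_1`: a path on 3 vertices plus isolated vertices. -/
def path3G (n : ℕ) : SimpleGraph (Fin n) :=
  SimpleGraph.fromRel (fun u v => ((u : ℕ) = 0 ∧ (v : ℕ) = 1) ∨ ((u : ℕ) = 1 ∧ (v : ℕ) = 2))

/-- Complete bipartite graph `K_{a,b}` on `Fin (a+b)`. -/
def compBip (a b : ℕ) : SimpleGraph (Fin (a + b)) :=
  SimpleGraph.fromRel (fun u v => (u : ℕ) < a ∧ a ≤ (v : ℕ))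

/-- `K_{r,s} + tK_1`: complete bipartite plus `t` isolated vertices. -/
def compBipPlus (r s t : ℕ) : SimpleGraph (Fin (r + s + t)) :=
  SimpleGraph.fromRel (fun u v => (u : ℕ) < r ∧ r ≤ (v : ℕ) ∧ (v : ℕ) < r + s)

/-- `K_1 + K_{n-1}`: an isolated vertex plus a complete graph. -/
def k1PlusComplete (n : ℕ) : SimpleGraph (Fin n) :=
  SimpleGraph.fromRel (fun u v => (u : ℕ) ≠ 0 ∧ (v : ℕ) ≠ 0)

/-- `(K_1 + K_2) ∇ (n-3)K_1`: join of `K_1 + K_2` with `n-3` isolated vertices. -/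
def k1k2JoinEmpty (n : ℕ) : SimpleGraph (Fin n) :=
  SimpleGraph.fromRel (fun u v =>
    ((u : ℕ) = 1 ∧ (v : ℕ) = 2) ∨ ((u : ℕ) < 3 ∧ 3 ≤ (v : ℕ)))


section Aux

open Matrix

variable {n : ℕ}

lemma trace_eq_sum_eigs (A : Matrix (Fin n) (Fin n) ℝ) (hA : A.IsHermitian) :
    A.trace = ∑ i, hA.eigenvalues i := by
  have hU : star (hA.eigenvectorUnitary : Matrix (Fin n) (Fin n) ℝ) *
      (hA.eigenvectorUnitary : Matrix (Fin n) (Fin n) ℝ) = 1 :=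
    Matrix.mem_unitaryGroup_iff'.mp hA.eigenvectorUnitary.2
  conv_lhs => rw [hA.spectral_theorem, Unitary.conjStarAlgAut_apply]
  rw [Matrix.trace_mul_cycle, hU, Matrix.one_mul]
  simp [Matrix.trace, Matrix.diag, Matrix.diagonal]

lemma trace_sq_eq_sum_sq_eigs (A : Matrix (Fin n) (Fin n) ℝ) (hA : A.IsHermitian) :
    (A * A).trace = ∑ i, (hA.eigenvalues i) ^ 2 := by
  have hdiag : star (hA.eigenvectorUnitary : Matrix (Fin n) (Fin n) ℝ) * A *
      (hA.eigenvectorUnitary : Matrix (Fin n) (Fin n) ℝ) =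
      Matrix.diagonal (RCLike.ofReal ∘ hA.eigenvalues) := by
    have := hA.conjStarAlgAut_star_eigenvectorUnitary
    simp only [Unitary.conjStarAlgAut_star_apply, Unitary.coe_star] at this
    exact this
  have h2 : A * A = ((hA.eigenvectorUnitary : Matrix (Fin n) (Fin n) ℝ) *
      Matrix.diagonal (RCLike.ofReal ∘ hA.eigenvalues)) *
      ((star (hA.eigenvectorUnitary : Matrix (Fin n) (Fin n) ℝ)) * A) := by
    rw [← Matrix.mul_assoc]
    congr 1
    conv_lhs => rw [hA.spectral_theorem, Unitary.conjStarAlgAut_apply]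
  rw [h2, Matrix.trace_mul_comm, ← Matrix.mul_assoc, Matrix.mul_assoc _ _
    (hA.eigenvectorUnitary : Matrix (Fin n) (Fin n) ℝ)]
  rw [Matrix.mul_assoc (star _) A _] at hdiag
  rw [hdiag, Matrix.diagonal_mul_diagonal]
  simp [Matrix.trace, Matrix.diag, Matrix.diagonal, sq]

end Aux

theorem energy_ge_two_sqrt_numEdges (n : ℕ) (G : SimpleGraph (Fin n)) :
    energy G ≥ 2 * Real.sqrt (numEdges G) := by
  letI : DecidableRel G.Adj := Classical.decRel _
  set hA := adjMatR_isHermitian G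
  set f : Fin n → ℝ := hA.eigenvalues with hf
  have hAdj : adjMatR G = G.adjMatrix ℝ := rfl
  -- sum of eigenvalues is zero
  have hsum : ∑ i, f i = 0 := by
    rw [← trace_eq_sum_eigs _ hA, hAdj]
    exact SimpleGraph.trace_adjMatrix ℝ G
  -- sum of squares is 2m
  have hcard : numEdges G = G.edgeFinset.card := by
    rw [numEdges, ← SimpleGraph.coe_edgeFinset, Set.ncard_coe_finset]
  have hNat : ∑ i, G.degree i = 2 * numEdges G := by
    rw [hcard]; exact SimpleGraph.sum_degrees_eq_twice_card_edges G
  have hsq : ∑ i, (f i) ^ 2 = 2 * (numEdges G : ℝ) := by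
    rw [← trace_sq_eq_sum_sq_eigs _ hA, hAdj]
    have hdeg : (G.adjMatrix ℝ * G.adjMatrix ℝ).trace = ∑ i, (G.degree i : ℝ) :=
      Finset.sum_congr rfl fun i _ => G.adjMatrix_mul_self_apply_self i
    rw [hdeg]
    exact_mod_cast congrArg (Nat.cast (R := ℝ)) hNat
  -- energy as a sum
  have hE : energy G = ∑ i, |f i| := by
    rw [energy, specMS, Multiset.map_map]
    rfl
  have hEnonneg : 0 ≤ energy G := by
    rw [hE]; positivity
  -- positive and negative parts
  set P := ∑ i, max (f i) 0 with hP
  set N := ∑ i, max (-(f i)) 0 with hN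
  have hPN : P - N = 0 := by
    have hx : P - N = ∑ i, f i := by
      rw [hP, hN, ← Finset.sum_sub_distrib]
      refine Finset.sum_congr rfl fun i _ => ?_
      rcases le_or_gt 0 (f i) with h | h
      · rw [max_eq_left h, max_eq_right (by linarith : -(f i) ≤ 0)]; ring
      · rw [max_eq_right h.le, max_eq_left (by linarith : (0:ℝ) ≤ -(f i))]; ring
    rw [hx, hsum]
  have hPNE : P + N = energy G := by
    rw [hE, hP, hN, ← Finset.sum_add_distrib]
    refine Finset.sum_congr rfl fun i _ => ?_
    rcases le_or_gt 0 (f i) with h | h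
    · rw [max_eq_left h, max_eq_right (by linarith : -(f i) ≤ 0), abs_of_nonneg h]; ring
    · rw [max_eq_right h.le, max_eq_left (by linarith : (0:ℝ) ≤ -(f i)), abs_of_neg h]; ring
  have hsqsplit : ∑ i, (f i) ^ 2 = (∑ i, (max (f i) 0) ^ 2) + ∑ i, (max (-(f i)) 0) ^ 2 := by
    rw [← Finset.sum_add_distrib]
    refine Finset.sum_congr rfl fun i _ => ?_
    rcases le_or_gt 0 (f i) with h | h
    · rw [max_eq_left h, max_eq_right (by linarith : -(f i) ≤ 0)]; ring
    · rw [max_eq_right h.le, max_eq_left (by linarith : (0:ℝ) ≤ -(f i))]; ring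
  have h1 : ∑ i, (max (f i) 0) ^ 2 ≤ P ^ 2 :=
    Finset.sum_sq_le_sq_sum_of_nonneg (fun i _ => le_max_right _ _)
  have h2 : ∑ i, (max (-(f i)) 0) ^ 2 ≤ N ^ 2 :=
    Finset.sum_sq_le_sq_sum_of_nonneg (fun i _ => le_max_right _ _)
  have hkey : 4 * (numEdges G : ℝ) ≤ (energy G) ^ 2 := by
    have hPeq : P = energy G / 2 := by linarith
    have hNeq : N = energy G / 2 := by linarith
    have h3 : 2 * (numEdges G : ℝ) ≤ P ^ 2 + N ^ 2 := by
      rw [← hsq, hsqsplit]; exact add_le_add h1 h2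
    rw [hPeq, hNeq] at h3
    nlinarith
  have h4 : Real.sqrt (4 * (numEdges G : ℝ)) ≤ Real.sqrt ((energy G) ^ 2) :=
    Real.sqrt_le_sqrt hkey
  rw [Real.sqrt_sq hEnonneg] at h4
  have h5 : Real.sqrt 4 = 2 := by
    rw [show (4:ℝ) = 2 ^ 2 by norm_num]
    exact Real.sqrt_sq (by norm_num)
  calc 2 * Real.sqrt (numEdges G) = Real.sqrt (4 * (numEdges G : ℝ)) := by
        rw [Real.sqrt_mul (by norm_num : (0:ℝ) ≤ 4), h5]
      _ ≤ energy G := h4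
end

section
/- σ(K_n, K_n \ e) = 2 for every n ≥ 2. -/
open SimpleGraph Finset

section SpectralAux

open Polynomial Matrix
set_option synthInstance.maxHeartbeats 1000000
set_option maxHeartbeats 1000000

lemma charpoly_conj {m : Type*} [Fintype m] [DecidableEq m] {R : Type*} [CommRing R]
    (U D V : Matrix m m R) (hUV : U * V = 1) (hVU : V * U = 1) :
    (U * D * V).charpoly = D.charpoly := by
  have key : charmatrix (U * D * V) = U.map C * charmatrix D * V.map C := by
    unfold charmatrix
    rw [Matrix.mul_sub, Matrix.sub_mul]
    congr 1
    · rw [scalar_apply, ← Matrix.smul_one_eq_diagonal, Matrix.mul_smul, Matrix.smul_mul,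
        Matrix.mul_one, ← Matrix.map_mul, hUV, Matrix.map_one _ (map_zero C) (map_one C)]
    · rw [RingHom.mapMatrix_apply, RingHom.mapMatrix_apply, ← Matrix.map_mul, ← Matrix.map_mul]
  rw [Matrix.charpoly, Matrix.charpoly, key, det_mul, det_mul, mul_comm, ← mul_assoc,
    ← det_mul, ← Matrix.map_mul, hVU, Matrix.map_one _ (map_zero C) (map_one C), det_one, one_mul]

lemma charpoly_of_hermitian {m : Type*} [Fintype m] [DecidableEq m] [LinearOrder m]
    {A : Matrix m m ℝ} (hA : A.IsHermitian) :
    A.charpoly = ∏ i, (X - C (hA.eigenvalues i)) := by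
  have hsp := hA.spectral_theorem
  have h1 : (hA.eigenvectorUnitary : Matrix m m ℝ) * (star hA.eigenvectorUnitary : Matrix m m ℝ) = 1 := by
    simpa using (Matrix.mem_unitaryGroup_iff).mp hA.eigenvectorUnitary.2
  have h2 : (star hA.eigenvectorUnitary : Matrix m m ℝ) * (hA.eigenvectorUnitary : Matrix m m ℝ) = 1 := by
    simpa using (Matrix.mem_unitaryGroup_iff').mp hA.eigenvectorUnitary.2
  have hd : (RCLike.ofReal ∘ hA.eigenvalues : m → ℝ) = hA.eigenvalues := by ext i; simp
  rw [hd] at hsp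
  rw [show A.charpoly = (Matrix.diagonal hA.eigenvalues).charpoly by
        conv_lhs => rw [hsp]
        exact charpoly_conj _ _ _ h1 h2]
  rw [Matrix.charpoly_of_upperTriangular _ (Matrix.blockTriangular_diagonal _)]
  simp

lemma specMS_eq_roots {n : ℕ} (G : SimpleGraph (Fin n)) :
    specMS G = (adjMatR G).charpoly.roots := by
  rw [charpoly_of_hermitian (adjMatR_isHermitian G)]
  have h : ∏ i, (X - C ((adjMatR_isHermitian G).eigenvalues i))
      = ((Finset.univ.val.map (adjMatR_isHermitian G).eigenvalues).map
          (fun a => X - C a)).prod := by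
    rw [Multiset.map_map]; rfl
  rw [h, Polynomial.roots_multiset_prod_X_sub_C]
  rfl

noncomputable abbrev φF : Polynomial ℝ →+* RatFunc ℝ := algebraMap (Polynomial ℝ) (RatFunc ℝ)

lemma φF_inj : Function.Injective φF := IsFractionRing.injective _ _

lemma charmatrix_map_entry {n : ℕ} (A : Matrix (Fin n) (Fin n) ℝ) (i j : Fin n) :
    ((charmatrix A).map φF) i j
      = (if i = j then φF X else 0) - RatFunc.C (A i j) := by
  by_cases h : i = j
  · subst h; simp [charmatrix_apply_eq, RatFunc.algebraMap_C]
  · simp [charmatrix_apply_ne _ _ _ h, h, RatFunc.algebraMap_C]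

lemma adjMatR_top_apply {n : ℕ} (i j : Fin n) :
    adjMatR (⊤ : SimpleGraph (Fin n)) i j = if i = j then 0 else 1 := by
  unfold adjMatR
  by_cases h : i = j <;> simp [h]

lemma xa_ne_zero : (φF X + 1 : RatFunc ℝ) ≠ 0 := by
  have h1 : (φF X + 1 : RatFunc ℝ) = φF (X + 1) := by simp
  rw [h1, ← map_zero φF]
  intro h
  have h3 : (X + 1 : Polynomial ℝ) ≠ 0 := by
    simpa using (Polynomial.monic_X_add_C (1:ℝ)).ne_zero
  exact h3 (φF_inj h)

lemma smul_factor {n m : ℕ} (a : RatFunc ℝ) (ha : a ≠ 0)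
    (U : Matrix (Fin n) (Fin m) (RatFunc ℝ)) (V : Matrix (Fin m) (Fin n) (RatFunc ℝ)) :
    a • ((1 : Matrix (Fin n) (Fin n) (RatFunc ℝ)) + (a⁻¹ • U) * V) = a • 1 + U * V := by
  rw [smul_add, Matrix.smul_mul, smul_smul, mul_inv_cancel₀ ha, one_smul]

lemma charpoly_top (n : ℕ) (hn : 1 ≤ n) :
    (adjMatR (⊤ : SimpleGraph (Fin n))).charpoly
      = (X - C ((n:ℝ) - 1)) * (X - C (-1))^(n-1) := by
  apply φF_inj
  have ha0 : (φF X + 1 : RatFunc ℝ) ≠ 0 := xa_ne_zero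
  set U : Matrix (Fin n) (Fin 1) (RatFunc ℝ) := Matrix.of (fun _ _ => (-1 : RatFunc ℝ)) with hU
  set V : Matrix (Fin 1) (Fin n) (RatFunc ℝ) := Matrix.of (fun _ _ => (1 : RatFunc ℝ)) with hV
  have hL : φF (adjMatR (⊤ : SimpleGraph (Fin n))).charpoly
      = (φF X + 1) ^ (n-1) * (φF X + 1 - n) := by
    rw [Matrix.charpoly, RingHom.map_det, RingHom.mapMatrix_apply]
    have hM : (charmatrix (adjMatR (⊤ : SimpleGraph (Fin n)))).map φF
        = (φF X + 1) • (1 : Matrix (Fin n) (Fin n) (RatFunc ℝ)) + U * V := by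
      ext i j
      rw [charmatrix_map_entry, adjMatR_top_apply]
      by_cases h : i = j <;>
        simp [h, hU, hV, Matrix.mul_apply, Matrix.one_apply]
    rw [hM, ← smul_factor _ ha0 U V, Matrix.det_smul, Matrix.det_one_add_mul_comm]
    have hVU : V * ((φF X + 1)⁻¹ • U) = Matrix.of (fun _ _ => -((n : RatFunc ℝ) * (φF X + 1)⁻¹)) := by
      ext i j
      simp [hU, hV, Matrix.mul_apply, Finset.sum_const, Finset.card_univ]
    have hdet : ((1 : Matrix (Fin 1) (Fin 1) (RatFunc ℝ)) +
        Matrix.of (fun _ _ => -((n : RatFunc ℝ) * (φF X + 1)⁻¹))).det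
        = 1 - (n : RatFunc ℝ) * (φF X + 1)⁻¹ := by
      rw [Matrix.det_fin_one]; simp [Matrix.one_apply]; ring
    rw [hVU, hdet]
    have hpow : (φF X + 1 : RatFunc ℝ) ^ n = (φF X + 1) ^ (n - 1) * (φF X + 1) := by
      rw [← pow_succ]; congr 1; omega
    rw [Fintype.card_fin, hpow, mul_assoc]
    congr 1
    rw [mul_sub, mul_one, mul_comm ((n : RatFunc ℝ)) _, ← mul_assoc,
      mul_inv_cancel₀ ha0, one_mul]
  rw [hL]
  simp only [_root_.map_mul, map_pow, map_sub, RatFunc.algebraMap_C, RatFunc.algebraMap_X,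
    map_natCast, _root_.map_one, map_neg]
  ring
lemma adjMatR_del_apply {n : ℕ} (u v : Fin n) (huv : u ≠ v) (i j : Fin n) :
    adjMatR ((⊤ : SimpleGraph (Fin n)).deleteEdges {s(u,v)}) i j
      = if i = j then 0
        else if (i = u ∧ j = v) ∨ (i = v ∧ j = u) then 0 else 1 := by
  unfold adjMatR
  by_cases h : i = j
  · simp [h]
  · by_cases h2 : (i = u ∧ j = v) ∨ (i = v ∧ j = u) <;>
      simp [h, h2, SimpleGraph.deleteEdges_adj, Sym2.eq_iff]

lemma charpoly_del (n : ℕ) (hn : 3 ≤ n) (u v : Fin n) (huv : u ≠ v) :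
    (adjMatR ((⊤ : SimpleGraph (Fin n)).deleteEdges {s(u,v)})).charpoly
      = X * (X - C (-1))^(n-3) * (X^2 - C ((n:ℝ)-3) * X - C (2*(n:ℝ)-4)) := by
  apply φF_inj
  have ha0 : (φF X + 1 : RatFunc ℝ) ≠ 0 := xa_ne_zero
  set U : Matrix (Fin n) (Fin 3) (RatFunc ℝ) := Matrix.of (fun i k =>
    if k = 0 then (if i = u then 1 else 0)
    else if k = 1 then (if i = v then 1 else 0) else -1) with hU
  set V : Matrix (Fin 3) (Fin n) (RatFunc ℝ) := Matrix.of (fun k j =>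
    if k = 0 then (if j = v then 1 else 0)
    else if k = 1 then (if j = u then 1 else 0) else 1) with hV
  have hL : φF (adjMatR ((⊤ : SimpleGraph (Fin n)).deleteEdges {s(u,v)})).charpoly
      = (φF X + 1) ^ (n-3) *
        ((φF X + 1)^3 - n * (φF X + 1)^2 + (φF X + 1) + n - 2) := by
    rw [Matrix.charpoly, RingHom.map_det, RingHom.mapMatrix_apply]
    have hM : (charmatrix (adjMatR ((⊤ : SimpleGraph (Fin n)).deleteEdges {s(u,v)}))).map φF
        = (φF X + 1) • (1 : Matrix (Fin n) (Fin n) (RatFunc ℝ)) + U * V := by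
      ext i j
      rw [charmatrix_map_entry, adjMatR_del_apply u v huv]
      have hsum : (U * V) i j = (if i = u then 1 else 0) * (if j = v then 1 else 0)
          + (if i = v then 1 else 0) * (if j = u then 1 else 0) - 1 := by
        rw [Matrix.mul_apply, Fin.sum_univ_three]
        simp [hU, hV]
        ring
      rw [Matrix.add_apply, hsum]
      by_cases h : i = j
      · subst h
        have h1 : ¬ (i = u ∧ i = v) := fun ⟨h1, h2⟩ => huv (h1 ▸ h2 ▸ rfl)
        have h2 : ¬ (i = v ∧ i = u) := fun ⟨h1, h2⟩ => huv (h2 ▸ h1 ▸ rfl)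
        by_cases hu : i = u <;> by_cases hv : i = v <;>
          simp_all [Matrix.smul_apply, Matrix.one_apply] <;> ring
      · by_cases h2 : (i = u ∧ j = v) ∨ (i = v ∧ j = u)
        · rcases h2 with ⟨h3, h4⟩ | ⟨h3, h4⟩ <;>
            · subst h3; subst h4
              simp_all [Matrix.smul_apply, Matrix.one_apply, Ne.symm]
        · have h3 : ¬ (i = u) ∨ ¬ (j = v) := by tauto
          have h4 : ¬ (i = v) ∨ ¬ (j = u) := by tauto
          have e1 : (if i = u then (1:RatFunc ℝ) else 0) * (if j = v then 1 else 0) = 0 := by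
            rcases h3 with h3 | h3 <;> simp [h3]
          have e2 : (if i = v then (1:RatFunc ℝ) else 0) * (if j = u then 1 else 0) = 0 := by
            rcases h4 with h4 | h4 <;> simp [h4]
          rw [e1, e2]
          simp only [Matrix.smul_apply, Matrix.one_apply, if_neg h, if_neg h2]
          simp
    rw [hM, ← smul_factor _ ha0 U V, Matrix.det_smul, Matrix.det_one_add_mul_comm]
    have hVU : V * ((φF X + 1)⁻¹ • U)
        = (φF X + 1)⁻¹ • !![(0:RatFunc ℝ),1,-1; 1,0,-1; 1,1,-(n:RatFunc ℝ)] := by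
      rw [Matrix.mul_smul]
      congr 1
      ext k l
      fin_cases k <;> fin_cases l <;>
        simp [hU, hV, Matrix.mul_apply, Finset.sum_ite_eq, Finset.sum_ite_eq', huv, huv.symm,
          ite_mul, mul_ite, Finset.sum_const, Finset.card_univ, Matrix.vecHead, Matrix.vecTail]
    rw [hVU]
    have hdet3 : ((1 : Matrix (Fin 3) (Fin 3) (RatFunc ℝ)) +
        (φF X + 1)⁻¹ • !![(0:RatFunc ℝ),1,-1; 1,0,-1; 1,1,-(n:RatFunc ℝ)]).det
        = ((φF X + 1)^3 - n * (φF X + 1)^2 + (φF X + 1) + n - 2) * ((φF X + 1)⁻¹)^3 := by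
      have hM3 : ((1 : Matrix (Fin 3) (Fin 3) (RatFunc ℝ)) +
          (φF X + 1)⁻¹ • !![(0:RatFunc ℝ),1,-1; 1,0,-1; 1,1,-(n:RatFunc ℝ)])
          = !![1, (φF X + 1)⁻¹, -(φF X + 1)⁻¹;
               (φF X + 1)⁻¹, 1, -(φF X + 1)⁻¹;
               (φF X + 1)⁻¹, (φF X + 1)⁻¹, 1 - (n:RatFunc ℝ) * (φF X + 1)⁻¹] := by
        ext i j
        fin_cases i <;> fin_cases j <;>
          simp [Matrix.one_apply, Matrix.smul_apply, smul_eq_mul] <;> ring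
      have d3 : ∀ c d : RatFunc ℝ, (!![1, c, -c; c, 1, -c; c, c, d] :
          Matrix (Fin 3) (Fin 3) (RatFunc ℝ)).det = d - d*c^2 + 2*c^2 - 2*c^3 := by
        intro c d
        rw [Matrix.det_fin_three]
        simp [Matrix.vecHead, Matrix.vecTail]
        ring
      rw [hM3, d3]
      have hc : (φF X + 1) * (φF X + 1)⁻¹ = 1 := mul_inv_cancel₀ ha0
      linear_combination (-((φF X + 1)^2 * ((φF X + 1)⁻¹)^2 + (φF X + 1) * (φF X + 1)⁻¹ + 1)
        + (n : RatFunc ℝ) * (φF X + 1)⁻¹ * ((φF X + 1) * (φF X + 1)⁻¹ + 1)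
        - ((φF X + 1)⁻¹)^2) * hc
    rw [hdet3, Fintype.card_fin]
    have hpow : (φF X + 1 : RatFunc ℝ) ^ n
        = (φF X + 1) ^ (n - 3) * ((φF X + 1))^3 := by
      rw [← pow_add]; congr 1; omega
    rw [hpow, mul_assoc]
    congr 1
    rw [mul_comm ((φF X + 1 : RatFunc ℝ) ^ 3 - ↑n * (φF X + 1) ^ 2 + (φF X + 1) + ↑n - 2),
      ← mul_assoc, ← mul_pow, mul_inv_cancel₀ ha0, one_pow, one_mul]
  rw [hL]
  simp only [_root_.map_mul, map_pow, map_sub, map_add, RatFunc.algebraMap_C,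
    RatFunc.algebraMap_X, map_natCast, _root_.map_one, map_neg, map_ofNat]
  ring


lemma sort_eq_of_sorted (s : Multiset ℝ) (L : List ℝ) (hL : List.Pairwise (· ≥ ·) L)
    (h : (L : Multiset ℝ) = s) : s.sort (· ≥ ·) = L := by
  subst h
  exact List.Perm.eq_of_pairwise' (r := (· ≥ ·))
    (Multiset.pairwise_sort _ _) hL
    (Multiset.coe_eq_coe.mp (Multiset.sort_eq (L : Multiset ℝ) (· ≥ ·)))

lemma specMS_top {n : ℕ} (hn : 1 ≤ n) :
    specMS (⊤ : SimpleGraph (Fin n))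
      = ((n:ℝ)-1) ::ₘ Multiset.replicate (n-1) (-1) := by
  rw [specMS_eq_roots, charpoly_top n hn]
  have h1 : ((X - C ((n:ℝ) - 1)) * (X - C (-1))^(n-1)) ≠ 0 :=
    ((monic_X_sub_C _).mul ((monic_X_sub_C _).pow _)).ne_zero
  rw [Polynomial.roots_mul h1, Polynomial.roots_X_sub_C, Polynomial.roots_pow,
    Polynomial.roots_X_sub_C, Multiset.nsmul_singleton]
  rfl

lemma specMS_del {n : ℕ} (hn : 3 ≤ n) (u v : Fin n) (huv : u ≠ v) :
    specMS ((⊤ : SimpleGraph (Fin n)).deleteEdges {s(u,v)})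
      = 0 ::ₘ (((n:ℝ) - 3 + Real.sqrt ((n:ℝ)^2 + 2*n - 7))/2) ::ₘ
        (((n:ℝ) - 3 - Real.sqrt ((n:ℝ)^2 + 2*n - 7))/2) ::ₘ Multiset.replicate (n-3) (-1) := by
  have hn3 : (3:ℝ) ≤ (n:ℝ) := by exact_mod_cast hn
  have hD : (0:ℝ) ≤ (n:ℝ)^2 + 2*n - 7 := by nlinarith
  set μp : ℝ := ((n:ℝ) - 3 + Real.sqrt ((n:ℝ)^2 + 2*n - 7))/2 with hμp
  set μm : ℝ := ((n:ℝ) - 3 - Real.sqrt ((n:ℝ)^2 + 2*n - 7))/2 with hμm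
  have hsum : μp + μm = (n:ℝ) - 3 := by rw [hμp, hμm]; ring
  have hprod : μp * μm = -(2*(n:ℝ) - 4) := by
    have h2 : μp * μm = (((n:ℝ)-3)^2 - Real.sqrt ((n:ℝ)^2 + 2*n - 7) ^ 2)/4 := by
      rw [hμp, hμm]; ring
    rw [h2, Real.sq_sqrt hD]; ring
  have hfact : (X:Polynomial ℝ)^2 - C ((n:ℝ)-3) * X - C (2*(n:ℝ)-4)
      = (X - C μp) * (X - C μm) := by
    have expand : ((X:Polynomial ℝ) - C μp) * (X - C μm)
        = X^2 - (C μp + C μm) * X + C μp * C μm := by ring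
    rw [expand, ← C_add, ← C_mul, hsum, hprod, map_neg]
    ring
  rw [specMS_eq_roots, charpoly_del n hn u v huv, hfact]
  have h1 : ((X:Polynomial ℝ) * (X - C (-1))^(n-3)) * ((X - C μp) * (X - C μm)) ≠ 0 :=
    ((monic_X.mul ((monic_X_sub_C _).pow _)).mul
      ((monic_X_sub_C _).mul (monic_X_sub_C _))).ne_zero
  have h2 : ((X:Polynomial ℝ) * (X - C (-1))^(n-3)) ≠ 0 :=
    (monic_X.mul ((monic_X_sub_C _).pow _)).ne_zero
  have h3 : ((X:Polynomial ℝ) - C μp) * (X - C μm) ≠ 0 :=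
    ((monic_X_sub_C _).mul (monic_X_sub_C _)).ne_zero
  rw [Polynomial.roots_mul h1, Polynomial.roots_mul h2, Polynomial.roots_mul h3,
    Polynomial.roots_X, Polynomial.roots_pow, Polynomial.roots_X_sub_C,
    Polynomial.roots_X_sub_C, Polynomial.roots_X_sub_C, Multiset.nsmul_singleton]
  rw [show (0:ℝ) ::ₘ μp ::ₘ μm ::ₘ Multiset.replicate (n-3) (-1)
      = ({0} + Multiset.replicate (n-3) (-1)) + ({μp} + {μm}) by
    simp only [← Multiset.singleton_add]
    ac_rfl]

lemma specMS_del_two (u v : Fin 2) (huv : u ≠ v) :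
    specMS ((⊤ : SimpleGraph (Fin 2)).deleteEdges {s(u,v)}) = Multiset.replicate 2 0 := by
  have hA : adjMatR ((⊤ : SimpleGraph (Fin 2)).deleteEdges {s(u,v)}) = 0 := by
    ext i j
    rw [adjMatR_del_apply u v huv]
    fin_cases u <;> fin_cases v <;> fin_cases i <;> fin_cases j <;> simp_all
  rw [specMS_eq_roots, hA]
  have h0 : (0 : Matrix (Fin 2) (Fin 2) ℝ).BlockTriangular id := fun _ _ _ => rfl
  rw [Matrix.charpoly_of_upperTriangular _ h0]
  simp only [Matrix.zero_apply, map_zero, sub_zero]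
  rw [Finset.prod_const, Finset.card_univ, Fintype.card_fin, Polynomial.roots_pow,
    Polynomial.roots_X, Multiset.nsmul_singleton]

lemma getD_replicate' (k m : ℕ) (a d : ℝ) (h : k < m) : (List.replicate m a).getD k d = a := by
  rw [List.getD_eq_getElem _ _ (by simpa using h)]
  exact List.getElem_replicate ..

lemma getD_append_last (l1 : List ℝ) (b d : ℝ) (k : ℕ) (h : l1.length = k) :
    (l1 ++ [b]).getD k d = b := by
  rw [List.getD_eq_getElem _ _ (by simp; omega), List.getElem_append_right (by omega)]
  simp [h]

lemma getD_append_replicate (k m : ℕ) (a b d : ℝ) (h : k < m) :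
    ((List.replicate m a ++ [b]).getD k d) = a := by
  rw [List.getD_eq_getElem _ _ (by simp; omega), List.getElem_append_left (by simpa using h)]
  exact List.getElem_replicate ..

end SpectralAux


theorem specDist_complete_minus_edge (n : ℕ) (hn : 2 ≤ n) (e : Sym2 (Fin n))
    (he : e ∈ (⊤ : SimpleGraph (Fin n)).edgeSet) :
    specDist (⊤ : SimpleGraph (Fin n)) ((⊤ : SimpleGraph (Fin n)).deleteEdges {e}) = 2 := by
  revert he
  induction e using Sym2.ind with
  | _ u v =>
  intro he
  have huv : u ≠ v := by simpa using he
  have hnR : (2:ℝ) ≤ (n:ℝ) := by exact_mod_cast hn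
  by_cases h3 : 3 ≤ n
  · -- main case n ≥ 3
    have hn3 : (3:ℝ) ≤ (n:ℝ) := by exact_mod_cast h3
    set S : ℝ := Real.sqrt ((n:ℝ)^2 + 2*n - 7) with hS
    have hS0 : 0 ≤ S := Real.sqrt_nonneg _
    have hSlow : (n:ℝ) - 1 ≤ S := by
      rw [hS, ← Real.sqrt_sq (show (0:ℝ) ≤ (n:ℝ)-1 by linarith)]
      exact Real.sqrt_le_sqrt (by nlinarith)
    have hShigh : S ≤ (n:ℝ) + 1 := by
      rw [hS, ← Real.sqrt_sq (show (0:ℝ) ≤ (n:ℝ)+1 by linarith)]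
      exact Real.sqrt_le_sqrt (by nlinarith)
    set μp : ℝ := ((n:ℝ) - 3 + S)/2 with hμp
    set μm : ℝ := ((n:ℝ) - 3 - S)/2 with hμm
    have hμp_le : μp ≤ (n:ℝ) - 1 := by rw [hμp]; linarith
    have hμp_nn : 0 ≤ μp := by rw [hμp]; linarith
    have hμm_le : μm ≤ -1 := by rw [hμm]; linarith
    have hμpm : μm ≤ μp := by rw [hμp, hμm]; linarith
    set L1 : List ℝ := ((n:ℝ)-1) :: List.replicate (n-1) (-1) with hL1
    set L2 : List ℝ := μp :: (0:ℝ) :: (List.replicate (n-3) (-1) ++ [μm]) with hL2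
    have hs1 : (specMS (⊤ : SimpleGraph (Fin n))).sort (· ≥ ·) = L1 := by
      apply sort_eq_of_sorted
      · rw [hL1]
        refine List.pairwise_cons.mpr ⟨?_, List.pairwise_replicate.mpr (Or.inr (le_refl _))⟩
        intro b hb
        rw [List.eq_of_mem_replicate hb]
        linarith
      · rw [specMS_top (by omega : 1 ≤ n), hL1, ← Multiset.cons_coe, Multiset.coe_replicate]
    have hs2 : (specMS ((⊤ : SimpleGraph (Fin n)).deleteEdges {s(u,v)})).sort (· ≥ ·) = L2 := by
      apply sort_eq_of_sorted
      · rw [hL2]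
        refine List.pairwise_cons.mpr ⟨?_, List.pairwise_cons.mpr ⟨?_, ?_⟩⟩
        · intro b hb
          simp only [List.mem_cons, List.mem_append, List.mem_replicate,
            List.mem_singleton, List.not_mem_nil, or_false] at hb
          rcases hb with rfl | ⟨_, rfl⟩ | rfl <;> linarith
        · intro b hb
          simp only [List.mem_append, List.mem_replicate, List.mem_singleton,
            List.not_mem_nil, or_false] at hb
          rcases hb with ⟨_, rfl⟩ | rfl <;> linarith
        · refine List.pairwise_append.mpr
            ⟨List.pairwise_replicate.mpr (Or.inr (le_refl _)), List.pairwise_singleton _ _, ?_⟩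
          intro a ha b hb
          rw [List.eq_of_mem_replicate ha, List.mem_singleton.mp hb]
          linarith
      · rw [specMS_del h3 u v huv, ← hS, ← hμp, ← hμm, hL2, ← Multiset.cons_coe,
          ← Multiset.cons_coe, ← Multiset.coe_add, Multiset.coe_replicate,
          Multiset.coe_singleton]
        simp only [← Multiset.singleton_add]
        ac_rfl
    have he1 : ∀ i : ℕ, eigval (⊤ : SimpleGraph (Fin n)) i = L1.getD i 0 := by
      intro i; rw [eigval, hs1]
    have he2 : ∀ i : ℕ,
        eigval ((⊤ : SimpleGraph (Fin n)).deleteEdges {s(u,v)}) i = L2.getD i 0 := by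
      intro i; rw [eigval, hs2]
    have g1 : ∀ i : ℕ, 1 ≤ i → i ≤ n-1 → L1.getD i 0 = -1 := by
      intro i h1 h2
      obtain ⟨k, rfl⟩ : ∃ k, i = k+1 := ⟨i-1, by omega⟩
      rw [hL1, List.getD_cons_succ, getD_replicate' k (n-1) _ _ (by omega)]
    have kmid : ∀ i : ℕ, 2 ≤ i → i ≤ n-2 → L2.getD i 0 = -1 := by
      intro i h1 h2
      obtain ⟨k, rfl⟩ : ∃ k, i = k+2 := ⟨i-2, by omega⟩
      rw [hL2, List.getD_cons_succ, List.getD_cons_succ,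
        getD_append_replicate k (n-3) _ _ _ (by omega)]
    have klast : L2.getD (n-1) 0 = μm := by
      obtain ⟨k, hk⟩ : ∃ k, n-1 = k+2 := ⟨n-3, by omega⟩
      rw [hL2, hk, List.getD_cons_succ, List.getD_cons_succ,
        getD_append_last _ _ _ _ (by simp; omega)]
    rw [specDist]
    have hsplit : ∑ i ∈ Finset.range n, |eigval (⊤ : SimpleGraph (Fin n)) i -
          eigval ((⊤ : SimpleGraph (Fin n)).deleteEdges {s(u,v)}) i|
        = (∑ i ∈ Finset.range (n-1), |eigval (⊤ : SimpleGraph (Fin n)) i -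
            eigval ((⊤ : SimpleGraph (Fin n)).deleteEdges {s(u,v)}) i|)
          + |eigval (⊤ : SimpleGraph (Fin n)) (n-1) -
              eigval ((⊤ : SimpleGraph (Fin n)).deleteEdges {s(u,v)}) (n-1)| := by
      rw [← Finset.sum_range_succ, show n-1+1 = n by omega]
    rw [hsplit]
    have hfun : ∀ i ∈ Finset.range (n-1),
        |eigval (⊤ : SimpleGraph (Fin n)) i -
          eigval ((⊤ : SimpleGraph (Fin n)).deleteEdges {s(u,v)}) i|
        = (if i = 0 then ((n:ℝ)-1-μp) else 0) + (if i = 1 then 1 else 0) := by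
      intro i hi
      rw [Finset.mem_range] at hi
      rw [he1, he2]
      rcases Nat.lt_or_ge i 1 with h | h
      · interval_cases i
        rw [hL2, hL1]
        simp only [List.getD_cons_zero, if_pos rfl]
        rw [abs_of_nonneg (by linarith)]
        norm_num
      · rcases Nat.lt_or_ge i 2 with h' | h'
        · interval_cases i
          rw [g1 1 le_rfl (by omega), hL2]
          norm_num
        · rw [g1 i (by omega) (by omega), kmid i h' (by omega)]
          norm_num [if_neg (by omega : ¬ i = 0), if_neg (by omega : ¬ i = 1)]
    rw [Finset.sum_congr rfl hfun, Finset.sum_add_distrib,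
      Finset.sum_ite_eq' (Finset.range (n-1)) 0 (fun _ => ((n:ℝ)-1-μp)),
      Finset.sum_ite_eq' (Finset.range (n-1)) 1 (fun _ => (1:ℝ)),
      if_pos (by rw [Finset.mem_range]; omega),
      if_pos (by rw [Finset.mem_range]; omega),
      he1, he2, g1 (n-1) (by omega) le_rfl, klast,
      abs_of_nonneg (by linarith : (0:ℝ) ≤ -1 - μm)]
    have hsumμ : μp + μm = (n:ℝ) - 3 := by rw [hμp, hμm]; ring
    linarith
  · -- n = 2
    have hn2 : n = 2 := by omega
    subst hn2
    have hs1 : (specMS (⊤ : SimpleGraph (Fin 2))).sort (· ≥ ·) = [(1:ℝ), -1] := by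
      apply sort_eq_of_sorted
      · simp [List.pairwise_cons]
      · rw [specMS_top (by omega : 1 ≤ 2)]
        norm_num
        rfl
    have hs2 : (specMS ((⊤ : SimpleGraph (Fin 2)).deleteEdges {s(u,v)})).sort (· ≥ ·)
        = [(0:ℝ), 0] := by
      apply sort_eq_of_sorted
      · simp [List.pairwise_cons]
      · rw [specMS_del_two u v huv]
        rfl
    rw [specDist, Finset.sum_range_succ, Finset.sum_range_succ, Finset.sum_range_zero,
      eigval, eigval, eigval, eigval, hs1, hs2]
    norm_num
end

section
/- A graph has exactly one positive adjacency eigenvalue if and only if its set of non-isolated vertices induces a complete multipartite graph (and is nonempty). -/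
open SimpleGraph Finset

section AuxSpectral
open Matrix

lemma adjMatR_of_adj {n : ℕ} {G : SimpleGraph (Fin n)} {u v : Fin n} (h : G.Adj u v) :
    adjMatR G u v = 1 := by
  simp [adjMatR, SimpleGraph.adjMatrix_apply, h]

lemma adjMatR_of_not_adj {n : ℕ} {G : SimpleGraph (Fin n)} {u v : Fin n} (h : ¬ G.Adj u v) :
    adjMatR G u v = 0 := by
  simp [adjMatR, SimpleGraph.adjMatrix_apply, h]

lemma specMS_card_filter {n : ℕ} (G : SimpleGraph (Fin n)) :
    ((specMS G).filter (fun x => 0 < x)).card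
      = (Finset.univ.filter (fun i => 0 < (adjMatR_isHermitian G).eigenvalues i)).card := by
  classical
  rw [specMS, Multiset.filter_map, Multiset.card_map]
  rfl

/-- quadratic form expansion via spectral theorem -/
lemma quadForm_expand {n : ℕ} (A : Matrix (Fin n) (Fin n) ℝ) (hA : A.IsHermitian) (w : Fin n → ℝ) :
    w ⬝ᵥ (A *ᵥ w) = ∑ i, hA.eigenvalues i *
      ((star (hA.eigenvectorUnitary : Matrix (Fin n) (Fin n) ℝ)) *ᵥ w) i ^ 2 := by
  set U : Matrix (Fin n) (Fin n) ℝ := (hA.eigenvectorUnitary : Matrix (Fin n) (Fin n) ℝ) with hU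
  set y := (star U) *ᵥ w with hy
  have hsU : star U = Uᵀ := by
    rw [Matrix.star_eq_conjTranspose, Matrix.conjTranspose_eq_transpose_of_trivial]
  conv_lhs => rw [hA.spectral_theorem]
  rw [Unitary.conjStarAlgAut_apply]
  rw [← hU, ← Matrix.mulVec_mulVec, ← Matrix.mulVec_mulVec, Matrix.dotProduct_mulVec,
    ← Matrix.mulVec_transpose, ← hsU, ← hy]
  rw [Matrix.dotProduct_mulVec]
  simp [Matrix.vecMul_diagonal, dotProduct, mul_comm]
  exact Finset.sum_congr rfl fun i _ => by ring

lemma sum_eigenvalues_eq_trace {n : ℕ} (A : Matrix (Fin n) (Fin n) ℝ) (hA : A.IsHermitian) :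
    ∑ i, hA.eigenvalues i = A.trace := by
  set U : Matrix (Fin n) (Fin n) ℝ := (hA.eigenvectorUnitary : Matrix (Fin n) (Fin n) ℝ) with hU
  have h1 : star U * U = 1 := by
    rw [hU]; exact Matrix.mem_unitaryGroup_iff'.mp hA.eigenvectorUnitary.2
  conv_rhs => rw [hA.spectral_theorem]
  rw [Unitary.conjStarAlgAut_apply]
  rw [Matrix.trace_mul_cycle, ← hU, h1, Matrix.one_mul, Matrix.trace_diagonal]
  simp [RCLike.ofReal_real_eq_id]

lemma exists_pos_eigen {n : ℕ} (A : Matrix (Fin n) (Fin n) ℝ) (hA : A.IsHermitian)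
    (htr : A.trace = 0) (hA0 : A ≠ 0) : ∃ i, 0 < hA.eigenvalues i := by
  by_contra hc
  push_neg at hc
  have hsum : ∑ i, hA.eigenvalues i = 0 := by rw [sum_eigenvalues_eq_trace A hA, htr]
  have hzero : ∀ i ∈ Finset.univ, hA.eigenvalues i = 0 :=
    (Finset.sum_eq_zero_iff_of_nonpos (fun i _ => hc i)).mp hsum
  apply hA0
  have hdiag : Matrix.diagonal (RCLike.ofReal ∘ hA.eigenvalues : Fin n → ℝ) = 0 := by
    rw [show (RCLike.ofReal ∘ hA.eigenvalues : Fin n → ℝ) = 0 from funext fun i => by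
      simp [hzero i (Finset.mem_univ i), RCLike.ofReal_real_eq_id]]
    exact Matrix.diagonal_zero
  rw [hA.spectral_theorem, hdiag]
  simp

lemma eigen_zero_of_zero {n : ℕ} (hA : (0 : Matrix (Fin n) (Fin n) ℝ).IsHermitian) (i : Fin n) :
    hA.eigenvalues i = 0 := by
  rw [hA.eigenvalues_eq]
  simp

open Matrix Finset

/-- If a 2-dim family is positive definite for the form, at least 2 positive eigenvalues. -/
lemma two_le_pos_card {n : ℕ} (A : Matrix (Fin n) (Fin n) ℝ) (hA : A.IsHermitian)
    (x y : Fin n → ℝ)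
    (h : ∀ a b : ℝ, ¬(a = 0 ∧ b = 0) →
      0 < (a • x + b • y) ⬝ᵥ (A *ᵥ (a • x + b • y))) :
    2 ≤ (Finset.univ.filter fun i => 0 < hA.eigenvalues i).card := by
  classical
  by_contra hlt
  push_neg at hlt
  have hone : ∀ i ∈ (Finset.univ.filter fun i => 0 < hA.eigenvalues i),
      ∀ j ∈ (Finset.univ.filter fun i => 0 < hA.eigenvalues i), i = j :=
    Finset.card_le_one.mp (Nat.lt_succ_iff.mp hlt)
  set sU : Matrix (Fin n) (Fin n) ℝ := star (hA.eigenvectorUnitary : Matrix (Fin n) (Fin n) ℝ)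
  set c := sU *ᵥ x with hc
  set d := sU *ᵥ y with hd
  -- expansion: for all a b, q(a x + b y) = ∑ μ i * (a * c i + b * d i)^2
  have hexp : ∀ a b : ℝ, (a • x + b • y) ⬝ᵥ (A *ᵥ (a • x + b • y))
      = ∑ i, hA.eigenvalues i * (a * c i + b * d i) ^ 2 := by
    intro a b
    rw [quadForm_expand A hA]
    refine Finset.sum_congr rfl fun i _ => ?_
    have : (sU *ᵥ (a • x + b • y)) i = a * c i + b * d i := by
      rw [Matrix.mulVec_add, Matrix.mulVec_smul, Matrix.mulVec_smul]
      simp [hc, hd]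
    rw [this]
  -- find coefficients killing the (at most one) positive index
  obtain ⟨a, b, hab, hkill⟩ : ∃ a b : ℝ, ¬(a = 0 ∧ b = 0) ∧
      ∀ i, 0 < hA.eigenvalues i → a * c i + b * d i = 0 := by
    by_cases hP : ∃ i₀, 0 < hA.eigenvalues i₀
    · obtain ⟨i₀, hi₀⟩ := hP
      have hmem : i₀ ∈ (Finset.univ.filter fun i => 0 < hA.eigenvalues i) := by
        simp [hi₀]
      by_cases hz : c i₀ = 0 ∧ d i₀ = 0
      · exact ⟨1, 0, by simp, fun i hi => by
          have : i = i₀ := hone i (by simp [hi]) i₀ hmem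
          simp [this, hz.1]⟩
      · refine ⟨d i₀, -(c i₀), ?_, fun i hi => ?_⟩
        · rintro ⟨h1, h2⟩
          exact hz ⟨by linarith [neg_eq_zero.mp h2], h1⟩
        · have : i = i₀ := hone i (by simp [hi]) i₀ hmem
          rw [this]; ring
    · push_neg at hP
      exact ⟨1, 0, by simp, fun i hi => absurd hi (not_lt.mpr (hP i))⟩
  have hpos := h a b hab
  rw [hexp a b] at hpos
  have : ∑ i, hA.eigenvalues i * (a * c i + b * d i) ^ 2 ≤ 0 := by
    refine Finset.sum_nonpos fun i _ => ?_
    by_cases hi : 0 < hA.eigenvalues i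
    · rw [hkill i hi]; simp
    · exact mul_nonpos_of_nonpos_of_nonneg (not_lt.mp hi) (sq_nonneg _)
  linarith

/-- If the form is ≤ 0 on the hyperplane t ⬝ᵥ w = 0, at most one positive eigenvalue. -/
lemma pos_card_le_one {n : ℕ} (A : Matrix (Fin n) (Fin n) ℝ) (hA : A.IsHermitian)
    (t : Fin n → ℝ)
    (h : ∀ w : Fin n → ℝ, t ⬝ᵥ w = 0 → w ⬝ᵥ (A *ᵥ w) ≤ 0) :
    (Finset.univ.filter fun i => 0 < hA.eigenvalues i).card ≤ 1 := by
  classical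
  rw [Finset.card_le_one]
  rintro i hi j hj
  simp only [Finset.mem_filter] at hi hj
  by_contra hij
  set U : Matrix (Fin n) (Fin n) ℝ := (hA.eigenvectorUnitary : Matrix (Fin n) (Fin n) ℝ) with hU
  have h1 : star U * U = 1 := by
    rw [hU]; exact Matrix.mem_unitaryGroup_iff'.mp hA.eigenvectorUnitary.2
  -- build w = U *ᵥ (a e_i + b e_j) with t ⬝ᵥ w = 0
  set ti := t ⬝ᵥ (U *ᵥ (Pi.single i 1)) with hti
  set tj := t ⬝ᵥ (U *ᵥ (Pi.single j 1)) with htj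
  obtain ⟨a, b, hab, hker⟩ : ∃ a b : ℝ, ¬(a = 0 ∧ b = 0) ∧ a * ti + b * tj = 0 := by
    by_cases hz : ti = 0 ∧ tj = 0
    · exact ⟨1, 0, by simp, by simp [hz.1]⟩
    · refine ⟨tj, -ti, ?_, by ring⟩
      rintro ⟨h1', h2'⟩
      exact hz ⟨by linarith [neg_eq_zero.mp h2'], h1'⟩
  set cvec : Fin n → ℝ := a • (Pi.single i 1 : Fin n → ℝ) + b • (Pi.single j 1 : Fin n → ℝ) with hcvec
  set w := U *ᵥ cvec with hw
  have htw : t ⬝ᵥ w = 0 := by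
    rw [hw, hcvec, Matrix.mulVec_add, Matrix.mulVec_smul, Matrix.mulVec_smul,
      dotProduct_add, dotProduct_smul, dotProduct_smul]
    simpa [hti, htj, smul_eq_mul] using hker
  have hback : star U *ᵥ w = cvec := by
    rw [hw, Matrix.mulVec_mulVec, h1, Matrix.one_mulVec]
  have hq : w ⬝ᵥ (A *ᵥ w) = hA.eigenvalues i * a ^ 2 + hA.eigenvalues j * b ^ 2 := by
    rw [quadForm_expand A hA, show star (hA.eigenvectorUnitary : Matrix (Fin n) (Fin n) ℝ) = star U from rfl]
    rw [← Finset.sum_subset (Finset.subset_univ ({i, j} : Finset (Fin n))) ?_]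
    · rw [Finset.sum_pair hij, hback]
      simp [hcvec, Pi.single_apply, hij, Ne.symm hij]
    · intro k _ hk
      simp only [Finset.mem_insert, Finset.mem_singleton, not_or] at hk
      rw [hback]
      simp [hcvec, Pi.single_apply, hk.1, hk.2]
  have hqpos : 0 < w ⬝ᵥ (A *ᵥ w) := by
    rw [hq]
    rcases not_and_or.mp hab with ha | hb
    · have : 0 < hA.eigenvalues i * a ^ 2 :=
        mul_pos hi.2 (by positivity)
      nlinarith [mul_nonneg (le_of_lt hj.2) (sq_nonneg b)]
    · have : 0 < hA.eigenvalues j * b ^ 2 :=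
        mul_pos hj.2 (by positivity)
      nlinarith [mul_nonneg (le_of_lt hi.2) (sq_nonneg a)]
  linarith [h w htw]

lemma adj_quad_le {n : ℕ} (G : SimpleGraph (Fin n)) {k : ℕ} (f : G.support → Fin k)
    (hiff : ∀ u v : G.support, G.Adj u v ↔ f u ≠ f v)
    (t : Fin n → ℝ) (ht1 : ∀ v ∈ G.support, t v = 1) (ht0 : ∀ v ∉ G.support, t v = 0)
    (w : Fin n → ℝ) (hw : t ⬝ᵥ w = 0) : w ⬝ᵥ (adjMatR G *ᵥ w) ≤ 0 := by
  classical
  set g : Fin n → Fin (k + 1) := fun v => if h : v ∈ G.support then (f ⟨v, h⟩).succ else 0 with hg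
  set W : Fin n → ℝ := fun v => t v * w v with hW
  have hEntry : ∀ u v, adjMatR G u v * (w u * w v)
      = W u * W v - (if g u = g v then W u * W v else 0) := by
    intro u v
    by_cases hu : u ∈ G.support
    · by_cases hv : v ∈ G.support
      · have htu : t u = 1 := ht1 u hu
        have htv : t v = 1 := ht1 v hv
        have hgu : g u = (f ⟨u, hu⟩).succ := by rw [hg]; simp [hu]
        have hgv : g v = (f ⟨v, hv⟩).succ := by rw [hg]; simp [hv]
        by_cases huv : u = v
        · subst huv
          rw [adjMatR_of_not_adj (G.loopless.irrefl u)]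
          simp [hW, htu]
        · by_cases hf : f ⟨u, hu⟩ = f ⟨v, hv⟩
          · have hnadj : ¬ G.Adj u v := fun hadj => (hiff ⟨u, hu⟩ ⟨v, hv⟩).mp hadj hf
            rw [adjMatR_of_not_adj hnadj]
            simp [hW, htu, htv, hgu, hgv, hf]
          · have hadj : G.Adj u v := (hiff ⟨u, hu⟩ ⟨v, hv⟩).mpr hf
            rw [adjMatR_of_adj hadj]
            have hgne : g u ≠ g v := by
              rw [hgu, hgv]; simpa [Fin.succ_inj] using hf
            simp [hW, htu, htv, hgne]
      · have hnadj : ¬ G.Adj u v := fun hadj => hv ⟨u, hadj.symm⟩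
        have htv : t v = 0 := ht0 v hv
        rw [adjMatR_of_not_adj hnadj]
        simp [hW, htv]
    · have hnadj : ¬ G.Adj u v := fun hadj => hu ⟨v, hadj⟩
      have htu : t u = 0 := ht0 u hu
      rw [adjMatR_of_not_adj hnadj]
      simp [hW, htu]
  have hq : w ⬝ᵥ (adjMatR G *ᵥ w) = ∑ u, ∑ v, adjMatR G u v * (w u * w v) := by
    simp only [dotProduct, Matrix.mulVec, Finset.mul_sum]
    exact Finset.sum_congr rfl fun u _ => Finset.sum_congr rfl fun v _ => by ring
  have hWsum : ∑ v, W v = 0 := by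
    rw [← hw]; rfl
  set s : Fin (k + 1) → ℝ := fun c => ∑ v ∈ Finset.univ.filter (fun v => g v = c), W v with hs
  have hfib : ∑ u, ∑ v, (if g u = g v then W u * W v else 0) = ∑ c, s c * s c := by
    have h1 : ∀ u, ∑ v, (if g u = g v then W u * W v else 0) = W u * s (g u) := by
      intro u
      rw [hs, Finset.mul_sum, Finset.sum_filter]
      exact Finset.sum_congr rfl fun v _ => by
        by_cases h : g u = g v
        · rw [if_pos h, if_pos h.symm]
        · rw [if_neg h, if_neg (fun hh => h hh.symm)]
    calc ∑ u, ∑ v, (if g u = g v then W u * W v else 0)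
        = ∑ u, W u * s (g u) := Finset.sum_congr rfl fun u _ => h1 u
      _ = ∑ c, ∑ u ∈ Finset.univ.filter (fun u => g u = c), W u * s (g u) :=
          (Finset.sum_fiberwise _ _ _).symm
      _ = ∑ c, s c * s c := by
          refine Finset.sum_congr rfl fun c _ => ?_
          have hcongr : ∀ u ∈ Finset.univ.filter (fun u => g u = c),
              W u * s (g u) = W u * s c := fun u hu => by
            rw [(Finset.mem_filter.mp hu).2]
          rw [Finset.sum_congr rfl hcongr, ← Finset.sum_mul]
  rw [hq]
  calc ∑ u, ∑ v, adjMatR G u v * (w u * w v)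
      = ∑ u, ∑ v, (W u * W v - (if g u = g v then W u * W v else 0)) := by
        exact Finset.sum_congr rfl fun u _ => Finset.sum_congr rfl fun v _ => hEntry u v
    _ = (∑ u, W u) * (∑ v, W v) - ∑ c, s c * s c := by
        rw [← hfib, Finset.sum_mul_sum]
        rw [← Finset.sum_sub_distrib]
        exact Finset.sum_congr rfl fun u _ => by rw [← Finset.sum_sub_distrib]
    _ ≤ 0 := by
        rw [hWsum]
        simp only [zero_mul, zero_sub, neg_nonpos]
        exact Finset.sum_nonneg fun c _ => mul_self_nonneg _

lemma adjMatR_nonneg {n : ℕ} (G : SimpleGraph (Fin n)) (u v : Fin n) :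
    0 ≤ adjMatR G u v := by
  by_cases h : G.Adj u v
  · rw [adjMatR_of_adj h]; norm_num
  · rw [adjMatR_of_not_adj h]

lemma adjMatR_le_one {n : ℕ} (G : SimpleGraph (Fin n)) (u v : Fin n) :
    adjMatR G u v ≤ 1 := by
  by_cases h : G.Adj u v
  · rw [adjMatR_of_adj h]
  · rw [adjMatR_of_not_adj h]; norm_num

lemma adjMatR_symm {n : ℕ} (G : SimpleGraph (Fin n)) (u v : Fin n) :
    adjMatR G u v = adjMatR G v u := by
  by_cases h : G.Adj u v
  · rw [adjMatR_of_adj h, adjMatR_of_adj h.symm]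
  · rw [adjMatR_of_not_adj h, adjMatR_of_not_adj (fun hh => h hh.symm)]

lemma forward_no_bad {n : ℕ} (G : SimpleGraph (Fin n)) {u v w : Fin n}
    (huw : G.Adj u w) (huv : ¬ G.Adj u v) (hvw : ¬ G.Adj v w) (hv : v ∈ G.support) :
    2 ≤ (Finset.univ.filter fun i => 0 < (adjMatR_isHermitian G).eigenvalues i).card := by
  classical
  obtain ⟨z, hz⟩ := hv
  have hvu : v ≠ u := fun h => hvw (h ▸ huw)
  have hvw' : v ≠ w := fun h => huv (h ▸ huw)
  have hzv : z ≠ v := hz.ne'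
  have hzu : z ≠ u := fun h => huv ((h ▸ hz).symm)
  have hzw : z ≠ w := fun h => hvw (h ▸ hz)
  have huw' : u ≠ w := huw.ne
  set A := adjMatR G with hA
  set x : Fin n → ℝ := Pi.single u 1 + Pi.single w 1 with hx
  set y : Fin n → ℝ := Pi.single v 1 + (1/2 : ℝ) • (Pi.single z 1 : Fin n → ℝ) with hy
  apply two_le_pos_card A (adjMatR_isHermitian G) x y
  intro a b hab
  set α := A u z with hα
  set β := A w z with hβ
  have e_uw : A u w = 1 := adjMatR_of_adj huw
  have e_wu : A w u = 1 := adjMatR_of_adj huw.symm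
  have e_vz : A v z = 1 := adjMatR_of_adj hz
  have e_zv : A z v = 1 := adjMatR_of_adj hz.symm
  have e_uv : A u v = 0 := adjMatR_of_not_adj huv
  have e_vu : A v u = 0 := adjMatR_of_not_adj (fun h => huv h.symm)
  have e_wv : A w v = 0 := adjMatR_of_not_adj (fun h => hvw h.symm)
  have e_vw : A v w = 0 := adjMatR_of_not_adj hvw
  have e_uu : A u u = 0 := adjMatR_of_not_adj (G.loopless.irrefl u)
  have e_ww : A w w = 0 := adjMatR_of_not_adj (G.loopless.irrefl w)
  have e_vv : A v v = 0 := adjMatR_of_not_adj (G.loopless.irrefl v)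
  have e_zz : A z z = 0 := adjMatR_of_not_adj (G.loopless.irrefl z)
  have e_zu : A z u = α := adjMatR_symm G z u
  have e_zw : A z w = β := adjMatR_symm G z w
  have hα0 : 0 ≤ α := adjMatR_nonneg G u z
  have hα1 : α ≤ 1 := adjMatR_le_one G u z
  have hβ0 : 0 ≤ β := adjMatR_nonneg G w z
  have hβ1 : β ≤ 1 := adjMatR_le_one G w z
  have hqval : (a • x + b • y) ⬝ᵥ (A *ᵥ (a • x + b • y))
      = 2 * a ^ 2 + b ^ 2 + a * b * (α + β) := by
    simp only [hx, hy, smul_add, smul_smul, Matrix.mulVec_add, Matrix.mulVec_smul,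
      Matrix.mulVec_single_one, Matrix.col_apply, dotProduct_add, add_dotProduct,
      dotProduct_smul, smul_dotProduct, single_dotProduct,
      smul_eq_mul, mul_one]
    rw [e_uw, e_wu, e_vz, e_zv, e_uv, e_vu, e_wv, e_vw, e_uu, e_ww, e_vv, e_zz, e_zu, e_zw, ← hα, ← hβ]
    ring
  rw [hqval]
  rcases not_and_or.mp hab with ha | hb
  · rcases le_or_gt 0 (a * b) with hab2 | hab2
    · nlinarith [mul_nonneg (by linarith : (0:ℝ) ≤ α + β) hab2, sq_pos_of_ne_zero ha, sq_nonneg b]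
    · have h2 : 0 ≤ (2 - (α + β)) * (-(a * b)) :=
        mul_nonneg (by linarith) (by linarith)
      nlinarith [sq_nonneg (a + b), sq_pos_of_ne_zero ha]
  · rcases le_or_gt 0 (a * b) with hab2 | hab2
    · nlinarith [mul_nonneg (by linarith : (0:ℝ) ≤ α + β) hab2, sq_pos_of_ne_zero hb, sq_nonneg a]
    · have h2 : 0 ≤ (2 - (α + β)) * (-(a * b)) :=
        mul_nonneg (by linarith) (by linarith)
      nlinarith [sq_nonneg (a + b), sq_pos_of_ne_zero hb, sq_nonneg a]

lemma eigen_ne_matrix_ne {n : ℕ} {A : Matrix (Fin n) (Fin n) ℝ} (hA : A.IsHermitian)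
    {i : Fin n} (h : hA.eigenvalues i ≠ 0) : A ≠ 0 := by
  intro h0
  subst h0
  exact h (eigen_zero_of_zero hA i)


end AuxSpectral

theorem one_positive_eigenvalue_iff (n : ℕ) (G : SimpleGraph (Fin n)) :
    ((specMS G).filter (fun x => 0 < x)).card = 1 ↔
      (G.support.Nonempty ∧ ∃ (k : ℕ) (f : G.support → Fin k), Function.Surjective f ∧
        ∀ u v : G.support, G.Adj u v ↔ f u ≠ f v) := by
  classical
  rw [specMS_card_filter]
  constructor
  · intro hcard
    have hpos : ∃ i, 0 < (adjMatR_isHermitian G).eigenvalues i := by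
      have hnonempty : (Finset.univ.filter fun i =>
          0 < (adjMatR_isHermitian G).eigenvalues i).Nonempty := by
        rw [← Finset.card_pos, hcard]; norm_num
      obtain ⟨i, hi⟩ := hnonempty
      exact ⟨i, (Finset.mem_filter.mp hi).2⟩
    obtain ⟨i, hi⟩ := hpos
    have hAne : adjMatR G ≠ 0 := eigen_ne_matrix_ne (adjMatR_isHermitian G) (ne_of_gt hi)
    have hne : G.support.Nonempty := by
      rw [Set.nonempty_iff_ne_empty]
      intro hempty
      apply hAne
      ext u v
      have hna : ¬ G.Adj u v := fun h => (Set.eq_empty_iff_forall_notMem.mp hempty u) ⟨v, h⟩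
      simp [adjMatR_of_not_adj hna]
    have htrans : ∀ a b c : ↥G.support, ¬G.Adj ↑a ↑b → ¬G.Adj ↑b ↑c → ¬G.Adj ↑a ↑c := by
      rintro ⟨u, hu⟩ ⟨v, hv⟩ ⟨w, hw⟩ huv hvw hadj
      have h2 := forward_no_bad G hadj huv hvw hv
      omega
    letI s : Setoid ↥G.support :=
      ⟨fun a b => ¬ G.Adj ↑a ↑b,
        ⟨fun a => G.irrefl, fun h hadj => h hadj.symm, fun {a b c} hab hbc => htrans a b c hab hbc⟩⟩
    haveI : Finite ↥G.support := Subtype.finite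
    haveI : Fintype (Quotient s) := Fintype.ofFinite _
    let k := Fintype.card (Quotient s)
    let e : Quotient s ≃ Fin k := Fintype.equivFin _
    refine ⟨hne, k, fun a => e (Quotient.mk'' a), ?_, ?_⟩
    · intro c
      obtain ⟨q, hq⟩ := e.surjective c
      obtain ⟨a, rfl⟩ := Quotient.exists_rep q
      exact ⟨a, hq⟩
    · intro a b
      constructor
      · intro hadj heq
        exact (Quotient.eq''.mp (e.injective heq)) hadj
      · intro hne'
        by_contra hnadj
        exact hne' (congrArg e (Quotient.sound' hnadj))
  · rintro ⟨hne, k, f, hsurj, hiff⟩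
    set t : Fin n → ℝ := fun v => if v ∈ G.support then 1 else 0 with htdef
    have hle : (Finset.univ.filter fun i =>
        0 < (adjMatR_isHermitian G).eigenvalues i).card ≤ 1 := by
      apply pos_card_le_one (adjMatR G) (adjMatR_isHermitian G) t
      intro w hw
      exact adj_quad_le G f hiff t
        (fun v hv => by rw [htdef]; simp [hv])
        (fun v hv => by rw [htdef]; simp [hv]) w hw
    have htrace : (adjMatR G).trace = 0 := by
      rw [Matrix.trace]
      refine Finset.sum_eq_zero fun i _ => ?_
      exact adjMatR_of_not_adj (G.irrefl)
    have hAne : adjMatR G ≠ 0 := by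
      obtain ⟨u, v, hadj⟩ := hne
      intro h0
      have h1 := adjMatR_of_adj hadj
      rw [h0] at h1
      simp at h1
    obtain ⟨i, hi⟩ := exists_pos_eigen (adjMatR G) (adjMatR_isHermitian G) htrace hAne
    have hge : 1 ≤ (Finset.univ.filter fun i =>
        0 < (adjMatR_isHermitian G).eigenvalues i).card := by
      rw [Nat.one_le_iff_ne_zero, ← Nat.pos_iff_ne_zero, Finset.card_pos]
      exact ⟨i, Finset.mem_filter.mpr ⟨Finset.mem_univ i, hi⟩⟩
    omega
end

section
/- For positive integers m, n, the ℓ¹-cospectrality cs(K_{m,n}) (minimum of σ(K_{m,n}, H) over graphs H on m+n vertices not isomorphic to K_{m,n}) is strictly positive if and only if among all factorizations xy = mn with x, y positive integers, the minimum of x + y is attained exactly at {x,y} = {m,n}. -/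
open SimpleGraph Finset

section AuxSpec
open Matrix Module
-- ===================== auxiliary material =====================

open Matrix in
lemma myconj_pow {N : ℕ} {A : Matrix (Fin N) (Fin N) ℝ} (hA : A.IsHermitian) (k : ℕ) :
    A ^ k = (hA.eigenvectorUnitary : Matrix (Fin N) (Fin N) ℝ) *
      (Matrix.diagonal hA.eigenvalues) ^ k * star (hA.eigenvectorUnitary : Matrix (Fin N) (Fin N) ℝ) := by
  set U : Matrix (Fin N) (Fin N) ℝ := (hA.eigenvectorUnitary : Matrix (Fin N) (Fin N) ℝ) with hU
  have hUst : star U * U = 1 := (Matrix.mem_unitaryGroup_iff').mp hA.eigenvectorUnitary.2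
  have hUst' : U * star U = 1 := (Matrix.mem_unitaryGroup_iff).mp hA.eigenvectorUnitary.2
  have hAeq : A = U * (Matrix.diagonal hA.eigenvalues) * star U := by
    have := hA.spectral_theorem
    simpa using this
  induction k with
  | zero => simp [pow_zero, ← Matrix.mul_assoc, hUst']
  | succ k ih =>
      have hr : U * (Matrix.diagonal hA.eigenvalues) ^ (k+1) * star U =
          (U * (Matrix.diagonal hA.eigenvalues) ^ k * star U) *
            (U * (Matrix.diagonal hA.eigenvalues) * star U) := by
        rw [pow_succ]
        repeat rw [Matrix.mul_assoc]
        rw [← Matrix.mul_assoc (star U) U, hUst, Matrix.one_mul]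
      rw [hr, ← ih, ← hAeq, ← pow_succ]

open Matrix in
lemma mytrace_pow_eq {N : ℕ} {A : Matrix (Fin N) (Fin N) ℝ} (hA : A.IsHermitian) (k : ℕ) :
    (A ^ k).trace = ∑ i, (hA.eigenvalues i) ^ k := by
  rw [myconj_pow hA, Matrix.trace_mul_cycle,
    (Matrix.mem_unitaryGroup_iff').mp hA.eigenvectorUnitary.2, Matrix.one_mul,
    Matrix.diagonal_pow, Matrix.trace_diagonal]
  simp [Pi.pow_apply]

open Matrix in
lemma eig_cube_of_cube {N : ℕ} {A : Matrix (Fin N) (Fin N) ℝ} (hA : A.IsHermitian)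
    {c : ℝ} (h : A ^ 3 = c • A) (i : Fin N) :
    (hA.eigenvalues i) ^ 3 = c * hA.eigenvalues i := by
  have hv := hA.mulVec_eigenvectorBasis i
  set v : Fin N → ℝ := ⇑(hA.eigenvectorBasis i) with hvdef
  set lam := hA.eigenvalues i
  have h3 : (A ^ 3) *ᵥ v = (lam ^ 3) • v := by
    have he : A ^ 3 = A * A * A := by rw [pow_succ, pow_succ, pow_one]
    rw [he, ← Matrix.mulVec_mulVec, ← Matrix.mulVec_mulVec]
    simp only [hv, Matrix.mulVec_smul, smul_smul]
    ring_nf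
  have h4 : (c • A) *ᵥ v = (c * lam) • v := by
    rw [Matrix.smul_mulVec, hv, smul_smul]
  rw [h, h4] at h3
  have hvne : v ≠ 0 := by
    intro h0
    apply hA.eigenvectorBasis.orthonormal.ne_zero i
    ext j
    simpa using congrFun h0 j
  obtain ⟨j, hj⟩ : ∃ j, v j ≠ 0 := by
    by_contra hcon
    push_neg at hcon
    exact hvne (funext hcon)
  have hq := congrFun h3 j
  simp only [Pi.smul_apply, smul_eq_mul] at hq
  exact (mul_right_cancel₀ hj hq).symm

lemma multiset_pin {N : ℕ} (c : ℝ) (hc : 0 < c) (f : Fin N → ℝ)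
    (h1 : ∀ i, f i = c ∨ f i = -c ∨ f i = 0)
    (h2 : ∑ i, f i = 0) (h3 : ∑ i, (f i)^2 = 2 * c^2) :
    (Finset.univ.val.map f) = c ::ₘ (-c) ::ₘ Multiset.replicate (N-2) 0 := by
  classical
  have h05 : ¬ (c = 0) := ne_of_gt hc
  have h01 : ¬ (c = -c) := by intro h; nlinarith
  have h02 : ¬ (-c = c) := by intro h; nlinarith
  have h03 : ¬ ((0:ℝ) = c) := by intro h; nlinarith
  have h04 : ¬ ((0:ℝ) = -c) := by intro h; nlinarith
  have h06 : ¬ (-c = (0:ℝ)) := by intro h; nlinarith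
  set P := Finset.univ.filter (fun i : Fin N => f i = c) with hP
  set Q := Finset.univ.filter (fun i : Fin N => f i = -c) with hQ
  set Z := Finset.univ.filter (fun i : Fin N => f i = 0) with hZ
  have hmemP : ∀ i, i ∈ P ↔ f i = c := by intro i; simp [hP]
  have hmemQ : ∀ i, i ∈ Q ↔ f i = -c := by intro i; simp [hQ]
  have hmemZ : ∀ i, i ∈ Z ↔ f i = 0 := by intro i; simp [hZ]
  have hfdecomp : ∀ i, f i = (if i ∈ P then c else 0) + (if i ∈ Q then (-c) else 0) := by
    intro i
    rcases h1 i with h | h | h <;>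
      simp [hmemP, hmemQ, h, h01, h02, h03, h04, h05, h06]
  have hsq : ∀ i, (f i)^2 = (if i ∈ P then c^2 else 0) + (if i ∈ Q then c^2 else 0) := by
    intro i
    rcases h1 i with h | h | h <;>
      simp [hmemP, hmemQ, h, h01, h02, h03, h04, h05, h06, neg_pow]
  have hsumP : ∀ (t : ℝ), (∑ i : Fin N, if i ∈ P then t else 0) = P.card * t := by
    intro t
    rw [Finset.sum_ite_mem, Finset.univ_inter, Finset.sum_const, nsmul_eq_mul]
  have hsumQ : ∀ (t : ℝ), (∑ i : Fin N, if i ∈ Q then t else 0) = Q.card * t := by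
    intro t
    rw [Finset.sum_ite_mem, Finset.univ_inter, Finset.sum_const, nsmul_eq_mul]
  have e2 : (P.card : ℝ) * c + Q.card * (-c) = 0 := by
    have hh := Finset.sum_congr rfl (fun i (_ : i ∈ (Finset.univ : Finset (Fin N))) => hfdecomp i)
    rw [Finset.sum_add_distrib, hsumP, hsumQ] at hh
    rw [← hh]
    exact h2
  have e3 : (P.card : ℝ) * c^2 + Q.card * c^2 = 2 * c^2 := by
    have hh := Finset.sum_congr rfl (fun i (_ : i ∈ (Finset.univ : Finset (Fin N))) => hsq i)
    rw [Finset.sum_add_distrib, hsumP, hsumQ] at hh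
    rw [← hh]
    exact h3
  have hab : (P.card : ℝ) = Q.card :=
    mul_right_cancel₀ h05 (by linarith : (P.card:ℝ) * c = (Q.card:ℝ) * c)
  have hab2 : (P.card : ℝ) + Q.card = 2 := by
    have hc2 : c^2 ≠ 0 := pow_ne_zero 2 h05
    exact mul_right_cancel₀ hc2 (by linarith : ((P.card : ℝ) + Q.card) * c^2 = 2 * c^2)
  have hPcard : P.card = 1 := by
    have : (P.card : ℝ) = 1 := by linarith
    exact_mod_cast this
  have hQcard : Q.card = 1 := by
    have : (Q.card : ℝ) = 1 := by linarith
    exact_mod_cast this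
  have hZcard : Z.card = N - 2 := by
    have hpart : ∀ i : Fin N, ((1:ℕ) = (if i ∈ P then 1 else 0) + (if i ∈ Q then 1 else 0)
        + (if i ∈ Z then 1 else 0)) := by
      intro i
      rcases h1 i with h | h | h <;>
        simp [hmemP, hmemQ, hmemZ, h, h01, h02, h03, h04, h05, h06]
    have hN : N = P.card + Q.card + Z.card := by
      have := Finset.sum_congr rfl (fun i (_ : i ∈ (Finset.univ : Finset (Fin N))) => hpart i)
      simp only [Finset.sum_const, Finset.sum_add_distrib, Finset.sum_ite_mem,
        Finset.univ_inter, smul_eq_mul, mul_one, Finset.card_univ, Fintype.card_fin] at this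
      simpa using this
    omega
  refine Multiset.ext.mpr (fun a => ?_)
  have hcount : ∀ t : ℝ, Multiset.count t (Finset.univ.val.map f)
      = (Finset.univ.filter (fun i : Fin N => f i = t)).card := by
    intro t
    rw [Multiset.count_map]
    rw [show (Finset.univ.filter (fun i : Fin N => f i = t)).card
        = (Multiset.filter (fun i : Fin N => f i = t) Finset.univ.val).card from rfl]
    congr 1
    apply Multiset.filter_congr
    intro x _
    exact ⟨Eq.symm, Eq.symm⟩
  rw [hcount a]
  by_cases ha1 : a = c
  · have he : Finset.univ.filter (fun i : Fin N => f i = a) = P := by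
      rw [hP]; apply Finset.filter_congr; intro i _; simp [ha1]
    rw [he, hPcard]
    simp [ha1, Multiset.count_cons, Multiset.count_replicate, h01, h02, h03, h04, h05, h06]
  · by_cases ha2 : a = -c
    · have he : Finset.univ.filter (fun i : Fin N => f i = a) = Q := by
        rw [hQ]; apply Finset.filter_congr; intro i _; simp [ha2]
      rw [he, hQcard]
      simp [ha2, Multiset.count_cons, Multiset.count_replicate, h01, h02, h03, h04, h05, h06]
    · by_cases ha3 : a = 0
      · have he : Finset.univ.filter (fun i : Fin N => f i = a) = Z := by
          rw [hZ]; apply Finset.filter_congr; intro i _; simp [ha3]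
        rw [he, hZcard]
        simp [ha3, Multiset.count_cons, Multiset.count_replicate, h01, h02, h03, h04, h05, h06]
      · have he : Finset.univ.filter (fun i : Fin N => f i = a) = ∅ := by
          apply Finset.filter_eq_empty_iff.mpr
          intro i _
          rcases h1 i with h | h | h <;> rw [h] <;>
            first
            | exact fun hh => ha1 hh.symm
            | exact fun hh => ha2 hh.symm
            | exact fun hh => ha3 hh.symm
        rw [he]
        have r1 : ¬ ((a:ℝ) = c) := ha1
        have r2 : ¬ ((a:ℝ) = -c) := ha2
        have r3 : ¬ ((0:ℝ) = a) := fun h => ha3 h.symm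
        simp [Multiset.count_cons, Multiset.count_replicate, r1, r2, r3, ha3]

lemma adjMatR_apply {n : ℕ} (G : SimpleGraph (Fin n)) [DecidableRel G.Adj] (u v : Fin n) :
    adjMatR G u v = if G.Adj u v then 1 else 0 := by
  by_cases h : G.Adj u v <;> simp [adjMatR, h]

lemma card_filter_val_mem (N : ℕ) (s : Finset ℕ) (hs : ∀ a ∈ s, a < N) :
    (Finset.univ.filter (fun u : Fin N => (u : ℕ) ∈ s)).card = s.card := by
  classical
  apply Finset.card_nbij (fun (u : Fin N) => (u : ℕ))
  · intro u hu; simpa using (Finset.mem_filter.mp hu).2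
  · intro u _ v _ h; exact Fin.val_injective h
  · intro a ha
    simp only [Finset.coe_filter, Set.mem_image, Set.mem_setOf_eq]
    exact ⟨⟨a, hs a ha⟩, by simpa using ha, rfl⟩

lemma card_filter_val_p (N : ℕ) (p : ℕ → Prop) [DecidablePred p] (s : Finset ℕ)
    (hs : ∀ a ∈ s, a < N) (hps : ∀ a, p a ↔ a ∈ s) :
    (Finset.univ.filter (fun u : Fin N => p (u : ℕ))).card = s.card := by
  classical
  rw [show (Finset.univ.filter (fun u : Fin N => p (u : ℕ)))
      = (Finset.univ.filter (fun u : Fin N => (u : ℕ) ∈ s)) from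
    Finset.filter_congr (fun u _ => by simp [hps])]
  exact card_filter_val_mem N s hs

lemma vecMulVec_mul_vecMulVec' {N : ℕ} (a b c d : Fin N → ℝ) :
    Matrix.vecMulVec a b * Matrix.vecMulVec c d = (b ⬝ᵥ c) • Matrix.vecMulVec a d := by
  ext i j
  rw [Matrix.mul_apply]
  simp only [Matrix.vecMulVec_apply, Matrix.smul_apply, smul_eq_mul, dotProduct]
  rw [Finset.sum_mul]
  rw [Finset.sum_congr rfl (fun w _ => by ring :
    ∀ w : Fin N, w ∈ Finset.univ → a i * b w * (c w * d j) = b w * c w * (a i * d j))]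

lemma trace_vecMulVec' {N : ℕ} (a b : Fin N → ℝ) :
    (Matrix.vecMulVec a b).trace = a ⬝ᵥ b := by
  simp [Matrix.trace, Matrix.diag, Matrix.vecMulVec_apply, dotProduct]

noncomputable def indP (N x : ℕ) : Fin N → ℝ := fun u => if (u:ℕ) < x then 1 else 0
noncomputable def indQ (N x y : ℕ) : Fin N → ℝ :=
  fun u => if x ≤ (u:ℕ) ∧ (u:ℕ) < x + y then 1 else 0

section structured
variable {N x y : ℕ} (G : SimpleGraph (Fin N))
variable (hadj : ∀ u v : Fin N, G.Adj u v ↔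
    ((u:ℕ) < x ∧ x ≤ (v:ℕ) ∧ (v:ℕ) < x + y) ∨ ((v:ℕ) < x ∧ x ≤ (u:ℕ) ∧ (u:ℕ) < x + y))

include hadj in
lemma adjMatR_structured :
    adjMatR G = Matrix.vecMulVec (indP N x) (indQ N x y)
      + Matrix.vecMulVec (indQ N x y) (indP N x) := by
  classical
  ext u v
  simp only [Matrix.add_apply, Matrix.vecMulVec_apply, indP, indQ, adjMatR_apply, hadj]
  split_ifs <;> (try ring) <;> (exfalso; omega)

lemma indP_dot_indP (hxN : x ≤ N) : (indP N x) ⬝ᵥ (indP N x) = (x : ℝ) := by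
  classical
  simp only [dotProduct, indP]
  rw [Finset.sum_congr rfl (fun w _ => by split_ifs <;> simp :
    ∀ w : Fin N, w ∈ Finset.univ → (if (w:ℕ) < x then (1:ℝ) else 0) * (if (w:ℕ) < x then (1:ℝ) else 0)
      = if (w:ℕ) < x then 1 else 0)]
  rw [Finset.sum_boole]
  norm_cast
  exact (card_filter_val_p N (fun a => a < x) (Finset.range x)
    (fun a ha => lt_of_lt_of_le (Finset.mem_range.mp ha) hxN) (fun a => by simp)).trans
    (Finset.card_range x)

lemma indQ_dot_indQ (hxyN : x + y ≤ N) : (indQ N x y) ⬝ᵥ (indQ N x y) = (y : ℝ) := by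
  classical
  simp only [dotProduct, indQ]
  rw [Finset.sum_congr rfl (fun w _ => by split_ifs <;> simp :
    ∀ w : Fin N, w ∈ Finset.univ → (if x ≤ (w:ℕ) ∧ (w:ℕ) < x + y then (1:ℝ) else 0) *
        (if x ≤ (w:ℕ) ∧ (w:ℕ) < x + y then (1:ℝ) else 0)
      = if x ≤ (w:ℕ) ∧ (w:ℕ) < x + y then 1 else 0)]
  rw [Finset.sum_boole]
  norm_cast
  exact ((card_filter_val_p N (fun a => x ≤ a ∧ a < x + y) (Finset.Ico x (x+y))
    (fun a ha => lt_of_lt_of_le (Finset.mem_Ico.mp ha).2 hxyN)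
    (fun a => by simp [Finset.mem_Ico])).trans (Nat.card_Ico x (x+y))).trans (by omega)

lemma indP_dot_indQ : (indP N x) ⬝ᵥ (indQ N x y) = 0 := by
  classical
  simp only [dotProduct, indP, indQ]
  rw [Finset.sum_congr rfl (fun w _ => by split_ifs <;> (try ring) <;> (exfalso; omega) :
    ∀ w : Fin N, w ∈ Finset.univ → (if (w:ℕ) < x then (1:ℝ) else 0) *
      (if x ≤ (w:ℕ) ∧ (w:ℕ) < x + y then (1:ℝ) else 0) = 0)]
  simp

lemma indQ_dot_indP : (indQ N x y) ⬝ᵥ (indP N x) = 0 := by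
  classical
  simp only [dotProduct, indP, indQ]
  rw [Finset.sum_congr rfl (fun w _ => by split_ifs <;> (try ring) <;> (exfalso; omega) :
    ∀ w : Fin N, w ∈ Finset.univ → (if x ≤ (w:ℕ) ∧ (w:ℕ) < x + y then (1:ℝ) else 0) *
      (if (w:ℕ) < x then (1:ℝ) else 0) = 0)]
  simp

include hadj in
lemma sq_structured (hxyN : x + y ≤ N) :
    adjMatR G * adjMatR G = (y:ℝ) • Matrix.vecMulVec (indP N x) (indP N x)
      + (x:ℝ) • Matrix.vecMulVec (indQ N x y) (indQ N x y) := by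
  rw [adjMatR_structured G hadj]
  rw [add_mul, mul_add, mul_add]
  rw [vecMulVec_mul_vecMulVec', vecMulVec_mul_vecMulVec', vecMulVec_mul_vecMulVec',
    vecMulVec_mul_vecMulVec']
  rw [indP_dot_indQ, indQ_dot_indP, indQ_dot_indQ hxyN,
    indP_dot_indP (le_trans (Nat.le_add_right x y) hxyN)]
  simp only [zero_smul, add_zero, zero_add]
  try abel

include hadj in
lemma cube_structured (hxyN : x + y ≤ N) :
    adjMatR G ^ 3 = ((x * y : ℕ) : ℝ) • adjMatR G := by
  have h2 : adjMatR G ^ 3 = (adjMatR G * adjMatR G) * adjMatR G := by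
    rw [pow_succ, pow_succ, pow_one]
  rw [h2, sq_structured G hadj hxyN]
  nth_rewrite 1 [adjMatR_structured G hadj]
  rw [add_mul, smul_mul_assoc, smul_mul_assoc, mul_add, mul_add]
  rw [vecMulVec_mul_vecMulVec', vecMulVec_mul_vecMulVec', vecMulVec_mul_vecMulVec',
    vecMulVec_mul_vecMulVec']
  rw [indP_dot_indQ, indQ_dot_indP, indQ_dot_indQ hxyN,
    indP_dot_indP (le_trans (Nat.le_add_right x y) hxyN)]
  rw [adjMatR_structured G hadj]
  push_cast
  simp only [zero_smul, add_zero, zero_add, smul_add, smul_smul, smul_zero]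
  rw [mul_comm (y:ℝ) (x:ℝ)]
  try abel

include hadj in
lemma trace_sq_structured (hxyN : x + y ≤ N) :
    (adjMatR G * adjMatR G).trace = 2 * ((x:ℝ) * (y:ℝ)) := by
  rw [sq_structured G hadj hxyN, Matrix.trace_add, Matrix.trace_smul, Matrix.trace_smul,
    trace_vecMulVec', trace_vecMulVec',
    indQ_dot_indQ hxyN, indP_dot_indP (le_trans (Nat.le_add_right x y) hxyN)]
  simp only [smul_eq_mul]
  ring

end structured

-- ============ Section 4 : spectrum of structured graphs ============

lemma trace_adjMatR {N : ℕ} (G : SimpleGraph (Fin N)) : (adjMatR G).trace = 0 := by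
  classical
  rw [adjMatR]
  exact @SimpleGraph.trace_adjMatrix ℝ (Fin N) G (Classical.decRel _) _ _ _

lemma specMS_structured {N x y : ℕ} (hx : 0 < x) (hy : 0 < y) (hxyN : x + y ≤ N)
    (G : SimpleGraph (Fin N))
    (hadj : ∀ u v : Fin N, G.Adj u v ↔
      ((u:ℕ) < x ∧ x ≤ (v:ℕ) ∧ (v:ℕ) < x + y) ∨ ((v:ℕ) < x ∧ x ≤ (u:ℕ) ∧ (u:ℕ) < x + y)) :
    specMS G = Real.sqrt ((x:ℝ) * (y:ℝ)) ::ₘ (-(Real.sqrt ((x:ℝ) * (y:ℝ)))) ::ₘ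
      Multiset.replicate (N-2) 0 := by
  classical
  set c := Real.sqrt ((x:ℝ)*(y:ℝ)) with hcdef
  have hxypos : (0:ℝ) < (x:ℝ)*(y:ℝ) := by
    have h1 : (0:ℝ) < (x:ℝ) := by exact_mod_cast hx
    have h2 : (0:ℝ) < (y:ℝ) := by exact_mod_cast hy
    positivity
  have hc : 0 < c := Real.sqrt_pos.mpr hxypos
  have hc2 : c^2 = (x:ℝ)*(y:ℝ) := Real.sq_sqrt (le_of_lt hxypos)
  have hA := adjMatR_isHermitian G
  have hcube : adjMatR G ^ 3 = (c^2) • adjMatR G := by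
    rw [cube_structured G hadj hxyN, hc2]
    norm_cast
  refine multiset_pin c hc _ ?_ ?_ ?_
  · intro i
    have h3 := eig_cube_of_cube hA hcube i
    set lam := hA.eigenvalues i
    have hfac : lam * (lam - c) * (lam + c) = 0 := by linear_combination h3
    rcases mul_eq_zero.mp hfac with h | h
    · rcases mul_eq_zero.mp h with h | h
      · right; right; exact h
      · left; linarith [sub_eq_zero.mp h]
    · right; left; linarith [neg_eq_of_add_eq_zero_left h]
  · have t1 := mytrace_pow_eq hA 1
    rw [pow_one, trace_adjMatR G] at t1
    simpa using t1.symm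
  · have t2 := mytrace_pow_eq hA 2
    rw [pow_two, trace_sq_structured G hadj hxyN] at t2
    rw [← t2, hc2]

-- ============ Section 5 : spectral distance vs multisets ============

lemma specMS_card {n : ℕ} (G : SimpleGraph (Fin n)) : Multiset.card (specMS G) = n := by
  rw [specMS]
  simp

lemma specDist_eq_zero_of_eq {n : ℕ} {G H : SimpleGraph (Fin n)} (h : specMS G = specMS H) :
    specDist G H = 0 := by
  unfold specDist eigval
  rw [h]
  simp

lemma specDist_nonneg {n : ℕ} (G H : SimpleGraph (Fin n)) : 0 ≤ specDist G H :=
  Finset.sum_nonneg (fun i _ => abs_nonneg _)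

lemma specMS_eq_of_specDist_eq_zero {n : ℕ} {G H : SimpleGraph (Fin n)}
    (h : specDist G H = 0) : specMS G = specMS H := by
  have hterm : ∀ i ∈ Finset.range n, |eigval G i - eigval H i| = 0 :=
    (Finset.sum_eq_zero_iff_of_nonneg (fun i _ => abs_nonneg _)).mp h
  have heq : ∀ i < n, eigval G i = eigval H i := by
    intro i hi
    have h0 := abs_eq_zero.mp (hterm i (Finset.mem_range.mpr hi))
    linarith
  have hlG : ((specMS G).sort (· ≥ ·)).length = n := by
    rw [Multiset.length_sort]; exact specMS_card G
  have hlH : ((specMS H).sort (· ≥ ·)).length = n := by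
    rw [Multiset.length_sort]; exact specMS_card H
  have hlists : (specMS G).sort (· ≥ ·) = (specMS H).sort (· ≥ ·) := by
    apply List.ext_getElem (by rw [hlG, hlH])
    intro i h1 h2
    have hi : i < n := by rwa [hlG] at h1
    have he := heq i hi
    rw [eigval, eigval, List.getD_eq_getElem _ _ h1, List.getD_eq_getElem _ _ h2] at he
    exact he
  calc specMS G = ((specMS G).sort (· ≥ ·) : Multiset ℝ) := (Multiset.sort_eq _ _).symm
    _ = ((specMS H).sort (· ≥ ·) : Multiset ℝ) := by rw [hlists]
    _ = specMS H := Multiset.sort_eq _ _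

-- ============ Section 6 : structure theorem for rank-2 graphs ============

lemma adjMatR_symm_entry {N : ℕ} (H : SimpleGraph (Fin N)) [DecidableRel H.Adj] (u v : Fin N) :
    adjMatR H u v = adjMatR H v u := by
  rw [adjMatR_apply, adjMatR_apply]
  simp [SimpleGraph.adj_comm]

lemma structure_of_rank2 {N : ℕ} (H : SimpleGraph (Fin N)) [DecidableRel H.Adj]
    (hrank : (adjMatR H).rank = 2)
    {u0 v0 : Fin N} (he : H.Adj u0 v0) :
    ∀ w z : Fin N, H.Adj w z ↔
      (H.Adj v0 w ∧ H.Adj u0 z) ∨ (H.Adj u0 w ∧ H.Adj v0 z) := by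
  classical
  set A := adjMatR H with hAdef
  have hAone : ∀ u v, H.Adj u v → A u v = 1 := by
    intro u v h; rw [hAdef, adjMatR_apply, if_pos h]
  have hAzero : ∀ u v, ¬ H.Adj u v → A u v = 0 := by
    intro u v h; rw [hAdef, adjMatR_apply, if_neg h]
  have hdiag : ∀ u, A u u = 0 := fun u => hAzero u u (H.loopless.irrefl u)
  -- columns
  set col : Fin N → (Fin N → ℝ) := fun w => fun z => A z w with hcol
  have hcolmem : ∀ w, col w ∈ LinearMap.range A.mulVecLin := by
    intro w
    refine ⟨Pi.single w 1, ?_⟩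
    rw [Matrix.mulVecLin_apply, Matrix.mulVec_single]
    ext z
    simp [hcol]
  have ha01 : A u0 v0 = 1 := hAone _ _ he
  have ha10 : A v0 u0 = 1 := hAone _ _ he.symm
  have h00 : A u0 u0 = 0 := hdiag u0
  have h11 : A v0 v0 = 0 := hdiag v0
  -- span of the two special columns equals the column space
  have hspan : Submodule.span ℝ {col u0, col v0} = LinearMap.range A.mulVecLin := by
    apply Submodule.eq_of_le_of_finrank_le
    · rw [Submodule.span_le]
      intro t ht
      rcases ht with h | h
      · rw [h]; exact hcolmem u0
      · rw [Set.mem_singleton_iff.mp h]; exact hcolmem v0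
    · -- finrank range ≤ finrank span
      have hli : LinearIndependent ℝ ![col u0, col v0] := by
        rw [LinearIndependent.pair_iff]
        intro a b hab
        have hv0 := congrFun hab v0
        have hu0 := congrFun hab u0
        simp only [Pi.add_apply, Pi.smul_apply, smul_eq_mul, Pi.zero_apply, hcol] at hv0 hu0
        rw [ha10, h11] at hv0
        rw [h00, ha01] at hu0
        constructor
        · linarith
        · linarith
      have hsp : finrank ℝ (Submodule.span ℝ {col u0, col v0}) = 2 := by
        have := finrank_span_eq_card hli
        simp only [Matrix.range_cons, Matrix.range_empty, Set.union_empty,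
          Fintype.card_fin] at this
        rw [show (Set.range ![col u0, col v0]) = {col u0, col v0} from ?_] at this
        · exact this
        · ext t
          simp [Matrix.range_cons]
          tauto
      rw [hsp]
      rw [show finrank ℝ (LinearMap.range A.mulVecLin) = A.rank from rfl, hrank]
  -- every column is a combination
  have hkey : ∀ w z : Fin N, A z w = A v0 w * A z u0 + A u0 w * A z v0 := by
    intro w z
    have hw : col w ∈ Submodule.span ℝ {col u0, col v0} := by
      rw [hspan]; exact hcolmem w
    obtain ⟨a, b, hab⟩ := Submodule.mem_span_pair.mp hw
    have hv0 := congrFun hab v0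
    have hu0 := congrFun hab u0
    have hz := congrFun hab z
    simp only [Pi.add_apply, Pi.smul_apply, smul_eq_mul, hcol] at hv0 hu0 hz
    rw [ha10, h11] at hv0
    rw [h00, ha01] at hu0
    -- hv0 : a * 1 + b * 0 = A v0 w ; hu0 : a * 0 + b * 1 = A u0 w
    have haval : a = A v0 w := by linarith
    have hbval : b = A u0 w := by linarith
    rw [haval, hbval] at hz
    linarith [hz]
  -- no vertex adjacent to both u0 and v0
  have hdisj : ∀ w : Fin N, ¬ (H.Adj v0 w ∧ H.Adj u0 w) := by
    rintro w ⟨h1, h2⟩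
    have := hkey w w
    rw [hdiag w, hAone _ _ h1, hAone _ _ h2, hAone _ _ h1.symm, hAone _ _ h2.symm] at this
    norm_num at this
  -- conclusion
  intro w z
  have hk := hkey w z
  constructor
  · intro hwz
    rw [hAone _ _ hwz.symm] at hk
    by_cases h1 : H.Adj v0 w
    · have h2 : ¬ H.Adj u0 w := fun hc => hdisj w ⟨h1, hc⟩
      rw [hAone _ _ h1, hAzero _ _ h2] at hk
      by_cases h3 : H.Adj u0 z
      · exact Or.inl ⟨h1, h3⟩
      · rw [hAzero _ _ (fun hc => h3 hc.symm)] at hk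
        norm_num at hk
    · by_cases h2 : H.Adj u0 w
      · rw [hAzero _ _ h1, hAone _ _ h2] at hk
        by_cases h3 : H.Adj v0 z
        · exact Or.inr ⟨h2, h3⟩
        · rw [hAzero _ _ (fun hc => h3 hc.symm)] at hk
          norm_num at hk
      · rw [hAzero _ _ h1, hAzero _ _ h2] at hk
        norm_num at hk
  · rintro (⟨h1, h2⟩ | ⟨h1, h2⟩)
    · have h1' : ¬ H.Adj u0 w := fun hc => hdisj w ⟨h1, hc⟩
      rw [hAone _ _ h1, hAzero _ _ h1', hAone _ _ h2.symm] at hk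
      by_contra hcon
      rw [hAzero _ _ (fun hc => hcon hc.symm)] at hk
      norm_num at hk
    · have h1' : ¬ H.Adj v0 w := fun hc => hdisj w ⟨hc, h1⟩
      rw [hAone _ _ h1, hAzero _ _ h1', hAone _ _ h2.symm] at hk
      by_contra hcon
      rw [hAzero _ _ (fun hc => hcon hc.symm)] at hk
      norm_num at hk

-- trace of A² via the bipartite structure
lemma trace_sq_of_parts {N : ℕ} (H : SimpleGraph (Fin N)) [DecidableRel H.Adj]
    (X Y : Finset (Fin N)) (hdisj : ∀ w, ¬ (w ∈ X ∧ w ∈ Y))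
    (hchar : ∀ w z : Fin N, H.Adj w z ↔ (w ∈ X ∧ z ∈ Y) ∨ (w ∈ Y ∧ z ∈ X)) :
    (adjMatR H * adjMatR H).trace = 2 * ((X.card : ℝ) * (Y.card : ℝ)) := by
  classical
  have hentry : ∀ w z : Fin N, adjMatR H w z * adjMatR H z w
      = if H.Adj w z then (1:ℝ) else 0 := by
    intro w z
    by_cases h : H.Adj w z
    · simp [adjMatR_apply, h, h.symm]
    · have h2 : ¬ H.Adj z w := fun hc => h hc.symm
      simp [adjMatR_apply, h, h2]
  have hinner : ∀ w : Fin N, (∑ z, if H.Adj w z then (1:ℝ) else 0)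
      = (if w ∈ X then (Y.card : ℝ) else 0) + (if w ∈ Y then (X.card : ℝ) else 0) := by
    intro w
    by_cases hwX : w ∈ X
    · have hwY : w ∉ Y := fun hc => hdisj w ⟨hwX, hc⟩
      rw [if_pos hwX, if_neg hwY, add_zero]
      rw [Finset.sum_congr rfl (fun z _ => by
        rw [show (if H.Adj w z then (1:ℝ) else 0) = if z ∈ Y then 1 else 0 from by
          by_cases hz : z ∈ Y <;> simp [hchar, hz, hwX, hwY]] :
        ∀ z : Fin N, z ∈ Finset.univ → (if H.Adj w z then (1:ℝ) else 0) = if z ∈ Y then 1 else 0)]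
      rw [Finset.sum_ite_mem, Finset.univ_inter, Finset.sum_const, nsmul_eq_mul, mul_one]
    · by_cases hwY : w ∈ Y
      · rw [if_neg hwX, if_pos hwY, zero_add]
        rw [Finset.sum_congr rfl (fun z _ => by
          rw [show (if H.Adj w z then (1:ℝ) else 0) = if z ∈ X then 1 else 0 from by
            by_cases hz : z ∈ X <;> simp [hchar, hz, hwX, hwY]] :
          ∀ z : Fin N, z ∈ Finset.univ → (if H.Adj w z then (1:ℝ) else 0) = if z ∈ X then 1 else 0)]
        rw [Finset.sum_ite_mem, Finset.univ_inter, Finset.sum_const, nsmul_eq_mul, mul_one]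
      · rw [if_neg hwX, if_neg hwY, add_zero]
        apply Finset.sum_eq_zero
        intro z _
        rw [if_neg]
        rw [hchar]
        rintro (⟨h1, _⟩ | ⟨h1, _⟩)
        · exact hwX h1
        · exact hwY h1
  have : (adjMatR H * adjMatR H).trace = ∑ w, ∑ z, adjMatR H w z * adjMatR H z w := by
    rw [Matrix.trace]
    apply Finset.sum_congr rfl
    intro w _
    rw [Matrix.diag_apply, Matrix.mul_apply]
  rw [this]
  rw [Finset.sum_congr rfl (fun w _ => by
      rw [Finset.sum_congr rfl (fun z _ => hentry w z), hinner w] :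
    ∀ w : Fin N, w ∈ Finset.univ → (∑ z, adjMatR H w z * adjMatR H z w)
      = (if w ∈ X then (Y.card : ℝ) else 0) + (if w ∈ Y then (X.card : ℝ) else 0))]
  rw [Finset.sum_add_distrib, Finset.sum_ite_mem, Finset.sum_ite_mem, Finset.univ_inter,
    Finset.univ_inter, Finset.sum_const, Finset.sum_const, nsmul_eq_mul, nsmul_eq_mul]
  ring

-- ============ Section 7 : building isomorphisms from partitions ============

lemma iso_of_parts {N : ℕ} (G G' : SimpleGraph (Fin N)) (X Y P Q : Finset (Fin N))
    (hXY : ∀ w, ¬ (w ∈ X ∧ w ∈ Y)) (hPQ : ∀ w, ¬ (w ∈ P ∧ w ∈ Q))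
    (hXYu : ∀ w, w ∈ X ∨ w ∈ Y) (hPQu : ∀ w, w ∈ P ∨ w ∈ Q)
    (hcard : X.card = P.card)
    (hG : ∀ w z, G.Adj w z ↔ (w ∈ X ∧ z ∈ Y) ∨ (w ∈ Y ∧ z ∈ X))
    (hG' : ∀ w z, G'.Adj w z ↔ (w ∈ P ∧ z ∈ Q) ∨ (w ∈ Q ∧ z ∈ P)) :
    Nonempty (G ≃g G') := by
  classical
  have hXuniv : X ∪ Y = Finset.univ :=
    Finset.eq_univ_of_forall (fun w => Finset.mem_union.mpr (hXYu w))
  have hPuniv : P ∪ Q = Finset.univ :=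
    Finset.eq_univ_of_forall (fun w => Finset.mem_union.mpr (hPQu w))
  have hdX : Disjoint X Y := Finset.disjoint_left.mpr (fun {a} ha hb => hXY a ⟨ha, hb⟩)
  have hdP : Disjoint P Q := Finset.disjoint_left.mpr (fun {a} ha hb => hPQ a ⟨ha, hb⟩)
  have hcardY : Y.card = Q.card := by
    have h1 : X.card + Y.card = N := by
      rw [← Finset.card_union_of_disjoint hdX, hXuniv, Finset.card_univ, Fintype.card_fin]
    have h2 : P.card + Q.card = N := by
      rw [← Finset.card_union_of_disjoint hdP, hPuniv, Finset.card_univ, Fintype.card_fin]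
    omega
  let eX : {w // w ∈ X} ≃ {w // w ∈ P} := Finset.equivOfCardEq hcard
  let eY : {w // w ∈ Y} ≃ {w // w ∈ Q} := Finset.equivOfCardEq hcardY
  let f : Fin N → Fin N := fun w =>
    if h : w ∈ X then (eX ⟨w, h⟩ : Fin N) else (eY ⟨w, (hXYu w).resolve_left h⟩ : Fin N)
  let g : Fin N → Fin N := fun z =>
    if h : z ∈ P then (eX.symm ⟨z, h⟩ : Fin N) else (eY.symm ⟨z, (hPQu z).resolve_left h⟩ : Fin N)
  have hfmemP : ∀ w, f w ∈ P ↔ w ∈ X := by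
    intro w
    by_cases h : w ∈ X
    · simp only [f, dif_pos h]
      exact ⟨fun _ => h, fun _ => (eX ⟨w, h⟩).2⟩
    · simp only [f, dif_neg h]
      constructor
      · intro hc
        exact absurd (And.intro hc (eY ⟨w, (hXYu w).resolve_left h⟩).2) (hPQ _)
      · intro hc; exact absurd hc h
  have hfmemQ : ∀ w, f w ∈ Q ↔ w ∈ Y := by
    intro w
    by_cases h : w ∈ X
    · simp only [f, dif_pos h]
      constructor
      · intro hc
        exact absurd (And.intro (eX ⟨w, h⟩).2 hc) (hPQ _)
      · intro hc; exact absurd (And.intro h hc) (hXY w)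
    · simp only [f, dif_neg h]
      exact ⟨fun _ => (hXYu w).resolve_left h, fun _ => (eY ⟨w, (hXYu w).resolve_left h⟩).2⟩
  have hgf : ∀ w, g (f w) = w := by
    intro w
    by_cases h : w ∈ X
    · have hm : f w ∈ P := (hfmemP w).mpr h
      simp only [f, dif_pos h] at hm ⊢
      simp only [g, dif_pos hm, Subtype.coe_eta, Equiv.symm_apply_apply]
    · have hw : w ∈ Y := (hXYu w).resolve_left h
      have hm : f w ∈ Q := (hfmemQ w).mpr hw
      have hmP : ¬ f w ∈ P := fun hc => hPQ _ ⟨hc, hm⟩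
      simp only [f, dif_neg h] at hmP ⊢
      simp only [g, dif_neg hmP, Subtype.coe_eta, Equiv.symm_apply_apply]
  have hfg : ∀ z, f (g z) = z := by
    intro z
    by_cases h : z ∈ P
    · have hm : (eX.symm ⟨z, h⟩ : Fin N) ∈ X := (eX.symm ⟨z, h⟩).2
      simp only [g, dif_pos h]
      simp only [f, dif_pos hm, Subtype.coe_eta, Equiv.apply_symm_apply]
    · have hz : z ∈ Q := (hPQu z).resolve_left h
      have hm : (eY.symm ⟨z, hz⟩ : Fin N) ∈ Y := (eY.symm ⟨z, hz⟩).2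
      have hmX : ¬ (eY.symm ⟨z, hz⟩ : Fin N) ∈ X := fun hc => hXY _ ⟨hc, hm⟩
      simp only [g, dif_neg h]
      simp only [f, dif_neg hmX, Subtype.coe_eta, Equiv.apply_symm_apply]
  let e : Fin N ≃ Fin N := ⟨f, g, hgf, hfg⟩
  refine ⟨⟨e, ?_⟩⟩
  intro a b
  show G'.Adj (f a) (f b) ↔ G.Adj a b
  rw [hG', hG, hfmemP, hfmemQ, hfmemP, hfmemQ]

-- ============ Section 8 : the concrete graphs ============

lemma compBip_adj' (a b : ℕ) (u v : Fin (a+b)) :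
    (compBip a b).Adj u v ↔
      ((u:ℕ) < a ∧ a ≤ (v:ℕ) ∧ (v:ℕ) < a + b) ∨
      ((v:ℕ) < a ∧ a ≤ (u:ℕ) ∧ (u:ℕ) < a + b) := by
  rw [compBip, SimpleGraph.fromRel_adj]
  have hu := u.isLt
  have hv := v.isLt
  constructor
  · rintro ⟨hne, h⟩
    have hne' : (u:ℕ) ≠ (v:ℕ) := fun hh => hne (Fin.ext hh)
    omega
  · intro h
    have hne' : (u:ℕ) ≠ (v:ℕ) := by omega
    exact ⟨fun hh => hne' (congrArg Fin.val hh), by omega⟩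

/-- `K_{x,y} + isolated vertices` on `Fin N`. -/
def bandG (N x y : ℕ) : SimpleGraph (Fin N) :=
  SimpleGraph.fromRel (fun u v => (u:ℕ) < x ∧ x ≤ (v:ℕ) ∧ (v:ℕ) < x + y)

lemma bandG_adj (N x y : ℕ) (u v : Fin N) :
    (bandG N x y).Adj u v ↔
      ((u:ℕ) < x ∧ x ≤ (v:ℕ) ∧ (v:ℕ) < x + y) ∨
      ((v:ℕ) < x ∧ x ≤ (u:ℕ) ∧ (u:ℕ) < x + y) := by
  rw [bandG, SimpleGraph.fromRel_adj]
  constructor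
  · rintro ⟨hne, h⟩
    exact h
  · intro h
    have hne' : (u:ℕ) ≠ (v:ℕ) := by omega
    exact ⟨fun hh => hne' (congrArg Fin.val hh), h⟩

lemma compBip_neighbor {m n : ℕ} (hm : 0 < m) (hn : 0 < n) (u : Fin (m+n)) :
    ∃ v, (compBip m n).Adj u v := by
  have hu := u.isLt
  by_cases h : (u:ℕ) < m
  · have hmn : m < m + n := by omega
    refine ⟨⟨m, hmn⟩, ?_⟩
    rw [compBip_adj']
    exact Or.inl ⟨h, le_refl m, hmn⟩
  · have h0 : 0 < m + n := by omega
    refine ⟨⟨0, h0⟩, ?_⟩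
    rw [compBip_adj']
    exact Or.inr ⟨hm, Nat.le_of_not_lt h, u.isLt⟩

lemma vieta {x y m n : ℕ} (hs : x + y = m + n) (hp : x * y = m * n) :
    (x = m ∧ y = n) ∨ (x = n ∧ y = m) := by
  have hs' : (x:ℤ) + y = m + n := by exact_mod_cast hs
  have hp' : (x:ℤ) * y = m * n := by exact_mod_cast hp
  have h : ((x:ℤ) - m) * ((x:ℤ) - n) = 0 := by linear_combination (x:ℤ) * hs' - hp'
  rcases mul_eq_zero.mp h with h | h
  · left
    have hxm : x = m := by exact_mod_cast sub_eq_zero.mp h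
    exact ⟨hxm, by omega⟩
  · right
    have hxn : x = n := by exact_mod_cast sub_eq_zero.mp h
    exact ⟨hxn, by omega⟩

-- ============ Section 9 : main theorem ============

theorem cs_compBip_pos_iff (m n : ℕ) (hm : 0 < m) (hn : 0 < n) :
    (∀ H : SimpleGraph (Fin (m + n)), ¬ Nonempty (H ≃g compBip m n) →
        0 < specDist (compBip m n) H) ↔
      (∀ x y : ℕ, 0 < x → 0 < y → x * y = m * n →
        m + n ≤ x + y ∧ (x + y = m + n → (x = m ∧ y = n) ∨ (x = n ∧ y = m))) := by
  classical
  set c := Real.sqrt ((m:ℝ) * (n:ℝ)) with hcdef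
  have hspecG : specMS (compBip m n)
      = c ::ₘ (-c) ::ₘ Multiset.replicate (m+n-2) 0 :=
    specMS_structured hm hn le_rfl _ (compBip_adj' m n)
  have hmnpos : (0:ℝ) < (m:ℝ) * (n:ℝ) := by
    have h1 : (0:ℝ) < (m:ℝ) := by exact_mod_cast hm
    have h2 : (0:ℝ) < (n:ℝ) := by exact_mod_cast hn
    positivity
  have hc : 0 < c := Real.sqrt_pos.mpr hmnpos
  have hc2 : c ^ 2 = (m:ℝ) * (n:ℝ) := Real.sq_sqrt (le_of_lt hmnpos)
  constructor
  · -- LHS → RHS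
    intro hLHS x y hx hy hxy
    have hle : m + n ≤ x + y := by
      by_contra hlt
      push_neg at hlt
      have hxyN : x + y ≤ m + n := le_of_lt hlt
      set Hb := bandG (m+n) x y with hHb
      have hspecH : specMS Hb = c ::ₘ (-c) ::ₘ Multiset.replicate (m+n-2) 0 := by
        have := specMS_structured hx hy hxyN Hb (bandG_adj (m+n) x y)
        rw [this]
        have : Real.sqrt ((x:ℝ) * (y:ℝ)) = c := by
          rw [hcdef]
          congr 1
          exact_mod_cast congrArg (fun t : ℕ => (t:ℝ)) hxy
        rw [this]
      have hdist0 : specDist (compBip m n) Hb = 0 :=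
        specDist_eq_zero_of_eq (hspecG.trans hspecH.symm)
      have hnoniso : ¬ Nonempty (Hb ≃g compBip m n) := by
        rintro ⟨e⟩
        set w : Fin (m+n) := ⟨x+y, hlt⟩ with hwdef
        have hiso : ∀ v, ¬ Hb.Adj w v := by
          intro v hv
          rw [bandG_adj] at hv
          have hwv : (w:ℕ) = x + y := rfl
          rw [hwv] at hv
          omega
        obtain ⟨z, hz⟩ := compBip_neighbor hm hn (e w)
        have hz' : (compBip m n).Adj (e w) (e (e.symm z)) := by
          rwa [RelIso.apply_symm_apply]
        exact hiso (e.symm z) (e.map_rel_iff.mp hz')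
      have := hLHS Hb hnoniso
      rw [hdist0] at this
      exact lt_irrefl 0 this
    exact ⟨hle, fun hEq => vieta hEq hxy⟩
  · -- RHS → LHS
    intro hRHS H hnoniso
    rcases lt_or_eq_of_le (specDist_nonneg (compBip m n) H) with h | h
    · exact h
    exfalso
    have hd0 : specDist (compBip m n) H = 0 := h.symm
    have hms : specMS H = c ::ₘ (-c) ::ₘ Multiset.replicate (m+n-2) 0 :=
      (specMS_eq_of_specDist_eq_zero hd0).symm.trans hspecG
    set hA := adjMatR_isHermitian H with hAdef
    -- rank is 2
    have hcne : c ≠ 0 := ne_of_gt hc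
    have hncne : -c ≠ 0 := by simpa using hcne
    have hrank : (adjMatR H).rank = 2 := by
      rw [hA.rank_eq_card_non_zero_eigs, Fintype.card_subtype]
      have h1 : (Finset.univ.filter (fun i => hA.eigenvalues i ≠ 0)).card
          = Multiset.card (Multiset.filter (fun r => r ≠ 0) (specMS H)) := by
        rw [specMS, Multiset.filter_map]
        rw [Multiset.card_map]
        rfl
      rw [h1, hms]
      rw [Multiset.filter_cons, Multiset.filter_cons]
      rw [if_pos hcne, if_pos hncne]
      rw [Multiset.filter_eq_nil.mpr (fun r hr => by
        rw [Multiset.eq_of_mem_replicate hr]; simp)]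
      simp
    -- sum of squares of eigenvalues
    have hsum2 : ∑ i, (hA.eigenvalues i)^2 = 2 * ((m:ℝ) * (n:ℝ)) := by
      have h1 : ∑ i, (hA.eigenvalues i)^2 = ((specMS H).map (fun t => t^2)).sum := by
        rw [specMS, Multiset.map_map]
        rfl
      rw [h1, hms]
      simp [Multiset.sum_replicate, neg_sq, hc2]
      try ring
      try nlinarith [hc2]
    have htr2 : (adjMatR H * adjMatR H).trace = 2 * ((m:ℝ) * (n:ℝ)) := by
      have := mytrace_pow_eq hA 2
      rw [pow_two] at this
      rw [this, hsum2]
    -- there is an edge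
    have hedge : ∃ u v : Fin (m+n), H.Adj u v := by
      by_contra hno
      push_neg at hno
      have hzero : adjMatR H = 0 := by
        ext u v
        rw [adjMatR_apply, if_neg (hno u v)]
        rfl
      rw [hzero] at hrank
      rw [Matrix.rank_zero] at hrank
      omega
    obtain ⟨u0, v0, he⟩ := hedge
    have hchar := structure_of_rank2 H hrank he
    set X := Finset.univ.filter (fun w => H.Adj v0 w) with hX
    set Y := Finset.univ.filter (fun w => H.Adj u0 w) with hY
    have hmemX : ∀ w, w ∈ X ↔ H.Adj v0 w := by intro w; simp [hX]
    have hmemY : ∀ w, w ∈ Y ↔ H.Adj u0 w := by intro w; simp [hY]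
    have hdisj : ∀ w, ¬ (w ∈ X ∧ w ∈ Y) := by
      rintro w ⟨h1, h2⟩
      have : H.Adj w w := (hchar w w).mpr (Or.inl ⟨(hmemX w).mp h1, (hmemY w).mp h2⟩)
      exact H.loopless.irrefl w this
    have hcharF : ∀ w z : Fin (m+n), H.Adj w z ↔ (w ∈ X ∧ z ∈ Y) ∨ (w ∈ Y ∧ z ∈ X) := by
      intro w z
      rw [hchar w z, hmemX, hmemY, hmemX, hmemY]
    -- cardinalities
    have htrX := trace_sq_of_parts H X Y hdisj hcharF
    rw [htr2] at htrX
    have hprodR : (X.card : ℝ) * (Y.card : ℝ) = (m:ℝ) * (n:ℝ) := by linarith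
    have hprod : X.card * Y.card = m * n := by exact_mod_cast hprodR
    have hXpos : 0 < X.card := Finset.card_pos.mpr ⟨u0, (hmemX u0).mpr he.symm⟩
    have hYpos : 0 < Y.card := Finset.card_pos.mpr ⟨v0, (hmemY v0).mpr he⟩
    have hdXY : Disjoint X Y := Finset.disjoint_left.mpr (fun {a} ha hb => hdisj a ⟨ha, hb⟩)
    have hsumle : X.card + Y.card ≤ m + n := by
      rw [← Finset.card_union_of_disjoint hdXY]
      have h1 := Finset.card_le_card (Finset.subset_univ (X ∪ Y))
      simpa using h1
    obtain ⟨hge, hcase⟩ := hRHS X.card Y.card hXpos hYpos hprod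
    have hsumeq : X.card + Y.card = m + n := le_antisymm hsumle hge
    -- X ∪ Y covers everything
    have hcover : ∀ w, w ∈ X ∨ w ∈ Y := by
      have huniv : X ∪ Y = Finset.univ := by
        apply Finset.eq_univ_of_card
        rw [Finset.card_union_of_disjoint hdXY, hsumeq, Fintype.card_fin]
      intro w
      have : w ∈ X ∪ Y := by rw [huniv]; exact Finset.mem_univ w
      exact Finset.mem_union.mp this
    -- the parts of compBip
    set P := Finset.univ.filter (fun u : Fin (m+n) => (u:ℕ) < m) with hP
    set Q := Finset.univ.filter (fun u : Fin (m+n) => m ≤ (u:ℕ)) with hQ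
    have hmemP : ∀ w : Fin (m+n), w ∈ P ↔ (w:ℕ) < m := by intro w; simp [hP]
    have hmemQ : ∀ w : Fin (m+n), w ∈ Q ↔ m ≤ (w:ℕ) := by intro w; simp [hQ]
    have hPQdisj : ∀ w, ¬ (w ∈ P ∧ w ∈ Q) := by
      rintro w ⟨h1, h2⟩
      rw [hmemP] at h1
      rw [hmemQ] at h2
      omega
    have hPQu : ∀ w, w ∈ P ∨ w ∈ Q := by
      intro w
      rw [hmemP, hmemQ]
      omega
    have hPcard : P.card = m := by
      rw [hP]
      rw [card_filter_val_p (m+n) (fun a => a < m) (Finset.range m)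
        (fun a ha => by have := Finset.mem_range.mp ha; omega) (fun a => by simp)]
      exact Finset.card_range m
    have hQcard : Q.card = n := by
      rw [hQ]
      rw [show (Finset.univ.filter (fun u : Fin (m+n) => m ≤ (u:ℕ)))
          = (Finset.univ.filter (fun u : Fin (m+n) => m ≤ (u:ℕ) ∧ (u:ℕ) < m + n)) from
        Finset.filter_congr (fun u _ => by have := u.isLt; constructor <;> intro h <;> omega)]
      rw [card_filter_val_p (m+n) (fun a => m ≤ a ∧ a < m + n) (Finset.Ico m (m+n))
        (fun a ha => (Finset.mem_Ico.mp ha).2) (fun a => by simp [Finset.mem_Ico])]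
      rw [Nat.card_Ico]
      omega
    have hG' : ∀ w z : Fin (m+n), (compBip m n).Adj w z ↔
        (w ∈ P ∧ z ∈ Q) ∨ (w ∈ Q ∧ z ∈ P) := by
      intro w z
      rw [compBip_adj', hmemP, hmemQ, hmemP, hmemQ]
      have := w.isLt
      have := z.isLt
      constructor <;> intro h <;> omega
    -- conclude
    rcases hcase hsumeq with ⟨hXm, hYn⟩ | ⟨hXn, hYm⟩
    · exact hnoniso (iso_of_parts H (compBip m n) X Y P Q hdisj hPQdisj hcover hPQu
        (by rw [hXm, hPcard]) hcharF hG')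
    · exact hnoniso (iso_of_parts H (compBip m n) X Y Q P hdisj
        (fun w hw => hPQdisj w ⟨hw.2, hw.1⟩) hcover (fun w => (hPQu w).symm)
        (by rw [hXn, hQcard])
        hcharF (fun w z => by rw [hG' w z]; tauto))

end AuxSpec
end
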